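/- For ζ in the strictly dominant cone X^{++}, the Weyl numerator Σ_{w∈W} ε_w e^{w(ζ)} in ℤ[X] is divisible by the Weyl denominator Σ_{w∈W} ε_w e^{w(ρ)}, and the quotient S⁰_ζ is W-invariant: S⁰_ζ ∈ ℤ[X]^W. -/

import Mathlib

/-- The (multiplicative) group structure on `AddAut A` by composition, as in the older Mathlib
(now `AddAut A` only carries an additive group structure). -/
instance addAutGroupOld (A : Type*) [Add A] : Group (AddAut A) where
  mul g h := AddEquiv.trans h g
  one := AddEquiv.refl _
  inv := AddEquiv.symm
  mul_assoc _ _ _ := rfl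
  one_mul _ := rfl
  mul_one _ := rfl
  inv_mul_cancel := AddEquiv.self_trans_symm

/-- The Weyl vector `ρ` (all coordinates equal to `1` in fundamental weight coordinates). -/
def rho {I : Type*} : I → ℤ := fun _ => 1

/-- The simple reflection `s_i` acting on the weight lattice `X = ℤ^I` written in
fundamental-weight coordinates: `(s_i λ)_j = λ_j − λ_i C_{ij}`, where `C` is the Cartan
matrix (so that the `i`-th simple coroot is the `i`-th coordinate functional). -/
def simpleRefl {I : Type*} (C : Matrix I I ℤ) (hC : ∀ i, C i i = 2) (i : I) :
    AddAut (I → ℤ) where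
  toFun l := fun j => l j - l i * C i j
  invFun l := fun j => l j - l i * C i j
  left_inv l := by funext j; simp [hC i]; ring
  right_inv l := by funext j; simp [hC i]; ring
  map_add' a b := by funext j; simp; ring

/-- The Weyl group `W`, the subgroup of additive automorphisms of `X = ℤ^I` generated by
the simple reflections. -/
def weylGroup {I : Type*} (C : Matrix I I ℤ) (hC : ∀ i, C i i = 2) :
    Subgroup (AddAut (I → ℤ)) :=
  Subgroup.closure (Set.range (simpleRefl C hC))

/-- The Weyl antisymmetrization `A_ζ = Σ_{w∈W} ε_w e^{w(ζ)} ∈ ℤ[X]`. -/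
noncomputable def weylNumerator {I : Type*} (C : Matrix I I ℤ) (hC : ∀ i, C i i = 2)
    [Fintype (weylGroup C hC)] (ε : weylGroup C hC →* ℤˣ) (ζ : I → ℤ) :
    AddMonoidAlgebra ℤ (I → ℤ) :=
  ∑ w : weylGroup C hC, (ε w : ℤ) • AddMonoidAlgebra.single ((w : AddAut (I → ℤ)) ζ) (1 : ℤ)

set_option linter.unusedSectionVars false
namespace WCF

variable {I : Type*} [Fintype I] [DecidableEq I]
variable (C : Matrix I I ℤ) (hC : ∀ i, C i i = 2)

/-- simple reflection as an element of the Weyl group -/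
def σ (i : I) : weylGroup C hC :=
  ⟨simpleRefl C hC i, Subgroup.subset_closure (Set.mem_range_self i)⟩

/-- action of a Weyl group element -/
def wact (w : weylGroup C hC) (x : I → ℤ) : I → ℤ := (w : AddAut (I → ℤ)) x

/-- the i-th simple root -/
def al (i : I) : I → ℤ := C i

variable {C hC}

lemma al_apply (i j : I) : al C i j = C i j := rfl

include hC in
lemma al_self (i : I) : al C i i = 2 := hC i

lemma wact_one (x : I → ℤ) : wact C hC 1 x = x := rfl

lemma wact_mul (u v : weylGroup C hC) (x : I → ℤ) :
    wact C hC (u * v) x = wact C hC u (wact C hC v x) := rfl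

lemma wact_add (w : weylGroup C hC) (x y : I → ℤ) :
    wact C hC w (x + y) = wact C hC w x + wact C hC w y :=
  map_add (w : AddAut (I → ℤ)) x y

lemma wact_smul (w : weylGroup C hC) (c : ℤ) (x : I → ℤ) :
    wact C hC w (c • x) = c • wact C hC w x := by
  exact map_zsmul ((w : AddAut (I → ℤ)) : (I → ℤ) ≃+ (I → ℤ)) c x

lemma wact_neg (w : weylGroup C hC) (x : I → ℤ) :
    wact C hC w (-x) = -wact C hC w x :=
  map_neg ((w : AddAut (I → ℤ)) : (I → ℤ) ≃+ (I → ℤ)) x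

lemma wact_sub (w : weylGroup C hC) (x y : I → ℤ) :
    wact C hC w (x - y) = wact C hC w x - wact C hC w y :=
  map_sub ((w : AddAut (I → ℤ)) : (I → ℤ) ≃+ (I → ℤ)) x y

lemma wact_sum {κ : Type*} (w : weylGroup C hC) (s : Finset κ) (f : κ → I → ℤ) :
    wact C hC w (∑ k ∈ s, f k) = ∑ k ∈ s, wact C hC w (f k) :=
  map_sum ((w : AddAut (I → ℤ)) : (I → ℤ) ≃+ (I → ℤ)) f s

lemma wact_injective (w : weylGroup C hC) : Function.Injective (wact C hC w) :=
  (w : AddAut (I → ℤ)).injective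

lemma wact_inv (w : weylGroup C hC) (x y : I → ℤ) (h : wact C hC w x = y) :
    wact C hC w⁻¹ y = x := by
  subst h; exact (w : AddAut (I → ℤ)).symm_apply_apply x

lemma wact_σ (i : I) (x : I → ℤ) :
    wact C hC (σ C hC i) x = x - x i • al C i := by
  funext j
  show x j - x i * C i j = _
  simp [al, Pi.smul_apply, smul_eq_mul]

lemma wact_σ_apply (i : I) (x : I → ℤ) (j : I) :
    wact C hC (σ C hC i) x j = x j - x i * C i j := rfl

lemma weyl_ext {u v : weylGroup C hC} (h : ∀ x, wact C hC u x = wact C hC v x) : u = v :=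
  Subtype.ext (AddEquiv.ext h)

lemma σ_mul_self (i : I) : σ C hC i * σ C hC i = 1 := by
  apply weyl_ext
  intro x
  rw [wact_mul, wact_σ, wact_σ, wact_one]
  funext j
  simp only [Pi.sub_apply, Pi.smul_apply, smul_eq_mul, al_apply]
  rw [hC i]
  ring

lemma σ_inv (i : I) : (σ C hC i)⁻¹ = σ C hC i := by
  rw [eq_comm, eq_inv_iff_mul_eq_one, σ_mul_self]

lemma wact_σ_al_self (i : I) : wact C hC (σ C hC i) (al C i) = -al C i := by
  rw [wact_σ, al_self (hC := hC)]
  funext j; simp [Pi.smul_apply, smul_eq_mul]; ring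

section Form

variable [Fintype (weylGroup C hC)]

variable (C hC) in
/-- invariant symmetric bilinear form -/
def BB (x y : I → ℤ) : ℤ := ∑ w : weylGroup C hC, ∑ j, wact C hC w x j * wact C hC w y j

lemma BB_symm (x y : I → ℤ) : BB C hC x y = BB C hC y x := by
  unfold BB; congr 1; funext w; congr 1; funext j; ring

lemma BB_add_left (x y z : I → ℤ) :
    BB C hC (x + y) z = BB C hC x z + BB C hC y z := by
  unfold BB
  rw [← Finset.sum_add_distrib]
  congr 1; funext w
  rw [wact_add, ← Finset.sum_add_distrib]
  congr 1; funext j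
  simp [Pi.add_apply]; ring

lemma BB_add_right (x y z : I → ℤ) :
    BB C hC z (x + y) = BB C hC z x + BB C hC z y := by
  rw [BB_symm, BB_add_left, BB_symm x z, BB_symm y z]

lemma BB_smul_left (c : ℤ) (x y : I → ℤ) :
    BB C hC (c • x) y = c * BB C hC x y := by
  unfold BB
  rw [Finset.mul_sum]
  congr 1; funext w
  rw [wact_smul, Finset.mul_sum]
  congr 1; funext j
  simp [Pi.smul_apply, smul_eq_mul]; ring

lemma BB_smul_right (c : ℤ) (x y : I → ℤ) :
    BB C hC x (c • y) = c * BB C hC x y := by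
  rw [BB_symm, BB_smul_left, BB_symm]

lemma BB_neg_left (x y : I → ℤ) : BB C hC (-x) y = -BB C hC x y := by
  have := BB_smul_left (C := C) (hC := hC) (-1) x y
  simpa using this

lemma BB_sub_left (x y z : I → ℤ) :
    BB C hC (x - y) z = BB C hC x z - BB C hC y z := by
  rw [sub_eq_add_neg, BB_add_left, BB_neg_left, sub_eq_add_neg]

lemma BB_sub_right (x y z : I → ℤ) :
    BB C hC z (x - y) = BB C hC z x - BB C hC z y := by
  rw [BB_symm, BB_sub_left, BB_symm x z, BB_symm y z]

lemma BB_wact (u : weylGroup C hC) (x y : I → ℤ) :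
    BB C hC (wact C hC u x) (wact C hC u y) = BB C hC x y := by
  unfold BB
  apply Fintype.sum_equiv (Equiv.mulRight u)
  intro w
  simp only [Equiv.coe_mulRight]
  rw [← wact_mul, ← wact_mul]

lemma BB_nonneg (x : I → ℤ) : 0 ≤ BB C hC x x := by
  apply Finset.sum_nonneg
  intro w _
  apply Finset.sum_nonneg
  intro j _
  exact mul_self_nonneg _

lemma BB_pos (x : I → ℤ) (hx : x ≠ 0) : 0 < BB C hC x x := by
  have h1 : (0:ℤ) < ∑ j, wact C hC 1 x j * wact C hC 1 x j := by
    rw [wact_one]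
    obtain ⟨j, hj⟩ : ∃ j, x j ≠ 0 := by
      by_contra h
      push_neg at h
      exact hx (funext h)
    have : (0:ℤ) < x j * x j := mul_self_pos.2 hj
    refine Finset.sum_pos' (fun k _ => mul_self_nonneg _) ⟨j, Finset.mem_univ j, this⟩
  calc (0:ℤ) < ∑ j, wact C hC 1 x j * wact C hC 1 x j := h1
    _ ≤ _ := Finset.single_le_sum (f := fun w => ∑ j, wact C hC w x j * wact C hC w x j)
        (fun w _ => Finset.sum_nonneg fun j _ => mul_self_nonneg _) (Finset.mem_univ 1)

lemma BB_zero_iff (x : I → ℤ) : BB C hC x x = 0 ↔ x = 0 := by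
  constructor
  · intro h
    by_contra hx
    exact absurd h (ne_of_gt (BB_pos x hx))
  · rintro rfl
    have := BB_smul_left (C := C) (hC := hC) 0 0 0
    simpa using this

/-- fundamental identity : 2 B(αᵢ, x) = B(αᵢ,αᵢ) xᵢ -/
lemma BB_al (i : I) (x : I → ℤ) :
    2 * BB C hC (al C i) x = BB C hC (al C i) (al C i) * x i := by
  have key : ∀ y z : I → ℤ, y i * BB C hC (al C i) z + z i * BB C hC (al C i) y
      = y i * z i * BB C hC (al C i) (al C i) := by
    intro y z
    have h := BB_wact (σ C hC i) y z
    rw [wact_σ, wact_σ] at h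
    rw [BB_sub_left, BB_sub_right, BB_sub_right, BB_smul_left, BB_smul_right, BB_smul_left,
      BB_smul_right] at h
    linear_combination (-1 : ℤ) * h + z i * BB_symm (C := C) (hC := hC) (al C i) y
  have h := key (al C i) x
  rw [al_self (hC := hC)] at h
  linarith [h]

lemma bal_pos (i : I) : 0 < BB C hC (al C i) (al C i) := by
  apply BB_pos
  intro h
  have : al C i i = 0 := by rw [h]; rfl
  rw [al_self (hC := hC)] at this
  norm_num at this

end Form


/-! ### Dominance and the positive cone -/

def dom (x : I → ℤ) : Prop := ∀ i, 0 ≤ x i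

def sdom (x : I → ℤ) : Prop := ∀ i, 1 ≤ x i

lemma sdom_rho : sdom (rho : I → ℤ) := fun _ => le_refl 1

lemma sdom.dom {x : I → ℤ} (h : sdom x) : dom x := fun i => le_trans one_pos.le (h i)

variable (C) in
def IsNN (z : I → ℤ) : Prop := ∃ n : I → ℕ, z = ∑ i, (n i : ℤ) • al C i

variable (C) in
def Pos (z : I → ℤ) : Prop := z ≠ 0 ∧ IsNN C z

lemma IsNN.add {x y : I → ℤ} (hx : IsNN C x) (hy : IsNN C y) : IsNN C (x + y) := by
  obtain ⟨n, rfl⟩ := hx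
  obtain ⟨m, rfl⟩ := hy
  refine ⟨fun i => n i + m i, ?_⟩
  rw [← Finset.sum_add_distrib]
  congr 1
  funext i
  push_cast
  rw [add_smul]

lemma IsNN.nsmul {x : I → ℤ} (hx : IsNN C x) (k : ℕ) : IsNN C ((k:ℤ) • x) := by
  obtain ⟨n, rfl⟩ := hx
  refine ⟨fun i => k * n i, ?_⟩
  rw [Finset.smul_sum]
  congr 1; funext i
  push_cast
  rw [smul_smul]

lemma IsNN.zero : IsNN C (0 : I → ℤ) := ⟨fun _ => 0, by simp⟩

lemma IsNN.al (i : I) : IsNN C (al C i) := by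
  refine ⟨fun j => if j = i then 1 else 0, ?_⟩
  rw [Finset.sum_eq_single i] <;> simp +contextual

section Form
variable [Fintype (weylGroup C hC)]
include hC

lemma BB_zero_left (y : I → ℤ) : BB C hC 0 y = 0 := by
  have := BB_smul_left (C := C) (hC := hC) 0 0 y
  simpa using this

lemma BB_sum_left {κ : Type*} (s : Finset κ) (f : κ → (I → ℤ)) (y : I → ℤ) :
    BB C hC (∑ i ∈ s, f i) y = ∑ i ∈ s, BB C hC (f i) y := by
  classical
  induction s using Finset.induction with
  | empty => simpa using BB_zero_left (C := C) (hC := hC) y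
  | insert a s' hni ih =>
                     rw [Finset.sum_insert hni, Finset.sum_insert hni, BB_add_left, ih]

lemma IsNN_BB_dom {z μ : I → ℤ} (hz : IsNN C z) (hμ : dom μ) :
    0 ≤ BB C hC z μ := by
  obtain ⟨n, rfl⟩ := hz
  have h2 : 2 * BB C hC (∑ i, (n i : ℤ) • al C i) μ
      = ∑ i, (n i : ℤ) * (BB C hC (al C i) (al C i) * μ i) := by
    rw [BB_sum_left, Finset.mul_sum]
    congr 1; funext i
    rw [BB_smul_left, ← BB_al]
    ring
  have hge : 0 ≤ 2 * BB C hC (∑ i, (n i : ℤ) • al C i) μ := by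
    rw [h2]
    apply Finset.sum_nonneg
    intro i _
    have := bal_pos (C := C) (hC := hC) i
    have := hμ i
    positivity
  linarith

lemma Pos_BB_sdom {z μ : I → ℤ} (hz : Pos C z) (hμ : sdom μ) :
    0 < BB C hC z μ := by
  obtain ⟨hz0, n, rfl⟩ := hz
  have h2 : 2 * BB C hC (∑ i, (n i : ℤ) • al C i) μ
      = ∑ i, (n i : ℤ) * (BB C hC (al C i) (al C i) * μ i) := by
    rw [BB_sum_left, Finset.mul_sum]
    congr 1; funext i
    rw [BB_smul_left, ← BB_al]
    ring
  obtain ⟨i0, hi0⟩ : ∃ i, n i ≠ 0 := by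
    by_contra h
    push_neg at h
    exact hz0 (by simp [h])
  have hgt : 0 < 2 * BB C hC (∑ i, (n i : ℤ) • al C i) μ := by
    rw [h2]
    apply Finset.sum_pos'
    · intro i _
      have := bal_pos (C := C) (hC := hC) i
      have h1 := le_trans one_pos.le (hμ i)
      positivity
    · refine ⟨i0, Finset.mem_univ _, ?_⟩
      have h1 : (1:ℤ) ≤ (n i0 : ℤ) := by exact_mod_cast Nat.one_le_iff_ne_zero.2 hi0
      have h2 := bal_pos (C := C) (hC := hC) i0
      have h3 := hμ i0
      exact mul_pos (by linarith) (mul_pos h2 (by linarith))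
  linarith

lemma Pos.comb {x y : I → ℤ} (hx : Pos C x) (hy : Pos C y) (p q : ℕ) (hpq : p + q ≠ 0) :
    Pos C ((p:ℤ) • x + (q:ℤ) • y) := by
  have hNN : IsNN C ((p:ℤ) • x + (q:ℤ) • y) := (hx.2.nsmul p).add (hy.2.nsmul q)
  refine ⟨?_, hNN⟩
  intro h0
  have h1 : 0 < BB C hC ((p:ℤ) • x + (q:ℤ) • y) (rho : I → ℤ) := by
    rw [BB_add_left, BB_smul_left, BB_smul_left]
    have hx1 := Pos_BB_sdom (hC := hC) hx (sdom_rho)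
    have hy1 := Pos_BB_sdom (hC := hC) hy (sdom_rho)
    rcases Nat.eq_zero_or_pos p with hp | hp
    · have hq : 0 < q := by omega
      have : (0:ℤ) < q := by exact_mod_cast hq
      subst hp; simp only [Nat.cast_zero, zero_mul, zero_add]
      positivity
    · have : (0:ℤ) < p := by exact_mod_cast hp
      have : (0:ℤ) ≤ q := by positivity
      nlinarith
  rw [h0, BB_zero_left] at h1
  exact absurd h1 (lt_irrefl 0)

lemma Pos.not_neg {z : I → ℤ} (hz : Pos C z) (hz' : Pos C (-z)) : False := by
  have h1 := Pos_BB_sdom (hC := hC) hz (sdom_rho)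
  have h2 := Pos_BB_sdom (hC := hC) hz' (sdom_rho)
  rw [BB_neg_left] at h2
  linarith

end Form

/-! ### Words and length -/

variable (C hC) in
def wordP (l : List I) : weylGroup C hC := (l.map (σ C hC)).prod

lemma wordP_nil : wordP C hC ([] : List I) = 1 := rfl

lemma wordP_cons (i : I) (l : List I) : wordP C hC (i :: l) = σ C hC i * wordP C hC l := by
  simp [wordP]

lemma wordP_append (l₁ l₂ : List I) :
    wordP C hC (l₁ ++ l₂) = wordP C hC l₁ * wordP C hC l₂ := by
  simp [wordP]

lemma wordP_concat (l : List I) (i : I) :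
    wordP C hC (l ++ [i]) = wordP C hC l * σ C hC i := by
  rw [wordP_append]; simp [wordP]

lemma sr_self_inv (i : I) : (simpleRefl C hC i)⁻¹ = simpleRefl C hC i := by
  have h2 : simpleRefl C hC i * simpleRefl C hC i = 1 := congrArg Subtype.val (σ_mul_self (hC := hC) i)
  exact inv_eq_of_mul_eq_one_right h2

lemma exists_word (w : weylGroup C hC) : ∃ l : List I, w = wordP C hC l := by
  have coe_wordP : ∀ l : List I, (wordP C hC l : AddAut (I → ℤ)) = (l.map (simpleRefl C hC)).prod := by
    intro l
    induction l with
    | nil => rfl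
    | cons i l ih => rw [wordP_cons, List.map_cons, List.prod_cons, ← ih]; rfl
  have main : ∀ (x : AddAut (I → ℤ)) (hx : x ∈ weylGroup C hC),
      ∃ l : List I, x = (l.map (simpleRefl C hC)).prod := by
    intro x hx
    induction hx using Subgroup.closure_induction with
    | mem x hx => obtain ⟨i, rfl⟩ := hx; exact ⟨[i], by simp⟩
    | one => exact ⟨[], by simp⟩
    | mul x y hx hy ihx ihy =>
        obtain ⟨l₁, rfl⟩ := ihx; obtain ⟨l₂, rfl⟩ := ihy
        exact ⟨l₁ ++ l₂, by rw [List.map_append, List.prod_append]⟩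
    | inv x hx ih =>
        obtain ⟨l, rfl⟩ := ih
        refine ⟨l.reverse, ?_⟩
        rw [List.prod_inv_reverse, List.map_reverse, List.map_map]
        congr 1
  obtain ⟨l, hl⟩ := main (w : AddAut (I → ℤ)) w.2
  exact ⟨l, Subtype.ext (by rw [coe_wordP]; exact hl)⟩

variable (C hC) in
noncomputable def len (w : weylGroup C hC) : ℕ := sInf {n | ∃ l : List I, l.length = n ∧ w = wordP C hC l}

lemma len_spec (w : weylGroup C hC) : ∃ l : List I, l.length = len C hC w ∧ w = wordP C hC l := by
  have hne : {n | ∃ l : List I, l.length = n ∧ w = wordP C hC l}.Nonempty := by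
    obtain ⟨l, hl⟩ := exists_word (hC := hC) w
    exact ⟨l.length, l, rfl, hl⟩
  exact Nat.sInf_mem hne

lemma len_le {w : weylGroup C hC} {l : List I} (h : w = wordP C hC l) : len C hC w ≤ l.length :=
  Nat.sInf_le ⟨l, rfl, h⟩

lemma len_one : len C hC (1 : weylGroup C hC) = 0 :=
  Nat.le_zero.1 (len_le (wordP_nil (C := C) (hC := hC)).symm)

lemma len_mul_le (u v : weylGroup C hC) : len C hC (u * v) ≤ len C hC u + len C hC v := by
  obtain ⟨l₁, h₁, e₁⟩ := len_spec (hC := hC) u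
  obtain ⟨l₂, h₂, e₂⟩ := len_spec (hC := hC) v
  have : u * v = wordP C hC (l₁ ++ l₂) := by rw [wordP_append, e₁, e₂]
  calc len C hC (u * v) ≤ (l₁ ++ l₂).length := len_le this
    _ = len C hC u + len C hC v := by rw [List.length_append, h₁, h₂]

section Eps
variable [Fintype (weylGroup C hC)]
variable {ε : weylGroup C hC →* ℤˣ}
variable (hε : ∀ i, ε ⟨simpleRefl C hC i, Subgroup.subset_closure (Set.mem_range_self i)⟩ = -1)

include hε

lemma eps_σ (i : I) : ε (σ C hC i) = -1 := hε i

lemma eps_word (l : List I) : ε (wordP C hC l) = (-1) ^ l.length := by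
  induction l with
  | nil => simp [wordP_nil]
  | cons i l ih => rw [wordP_cons, map_mul, eps_σ hε, ih, List.length_cons, pow_succ, mul_comm]

lemma eps_len (w : weylGroup C hC) : ε w = (-1) ^ (len C hC w) := by
  obtain ⟨l, hl, he⟩ := len_spec (hC := hC) w
  rw [← hl, he, eps_word hε]

lemma len_σ_ne (w : weylGroup C hC) (i : I) : len C hC (w * σ C hC i) ≠ len C hC w := by
  intro he
  have h1 : ε (w * σ C hC i) = ε w * (-1) := by rw [map_mul, eps_σ hε]
  rw [eps_len hε, eps_len hε w, he] at h1
  have h2 : ((-1:ℤˣ)) ^ (len C hC w) * 1 = ((-1:ℤˣ)) ^ (len C hC w) * (-1) := by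
    rw [mul_one]; exact h1
  have h3 := mul_left_cancel h2
  exact absurd h3 (by decide)

end Eps

section DomRep
variable [Fintype (weylGroup C hC)]

lemma BB_al_rho (i : I) : 0 < BB C hC (al C i) (rho : I → ℤ) := by
  have h := BB_al (C := C) (hC := hC) i (rho : I → ℤ)
  have h2 := bal_pos (C := C) (hC := hC) i
  have : (rho : I → ℤ) i = 1 := rfl
  rw [this, mul_one] at h
  linarith

/-- every orbit contains a dominant element -/
lemma exists_dom_rep (x : I → ℤ) : ∃ u : weylGroup C hC, dom (wact C hC u x) := by
  obtain ⟨u, _, hmax⟩ := Finset.exists_max_image Finset.univ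
    (fun w : weylGroup C hC => BB C hC (wact C hC w x) (rho : I → ℤ)) ⟨1, Finset.mem_univ 1⟩
  refine ⟨u, fun i => ?_⟩
  set y := wact C hC u x with hy
  have h1 : BB C hC (wact C hC (σ C hC i * u) x) (rho : I → ℤ) ≤ BB C hC y (rho : I → ℤ) :=
    hmax _ (Finset.mem_univ _)
  rw [wact_mul, ← hy, wact_σ, BB_sub_left, BB_smul_left] at h1
  have h2 := BB_al_rho (C := C) (hC := hC) i
  nlinarith
end DomRep



/-! ### Dihedral subgroups -/

section Dihedral
variable [Fintype (weylGroup C hC)]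

lemma wact_comb (w : weylGroup C hC) (c d : ℤ) (x y : I → ℤ) :
    wact C hC w (c • x + d • y) = c • wact C hC w x + d • wact C hC w y := by
  rw [wact_add, wact_smul, wact_smul]

lemma refl_al (k i' : I) :
    wact C hC (σ C hC k) (al C i') = al C i' - (C i' k) • al C k := by
  rw [wact_σ]; rfl

variable (C hC) in
/-- the rotation s_i s_j -/
def rr (i j : I) : weylGroup C hC := σ C hC i * σ C hC j

variable (C hC) in
def t2 (i j : I) (b : Bool) : weylGroup C hC := if b then σ C hC i else σ C hC j

variable (C hC) in
def wordP2 (i j : I) (l : List Bool) : weylGroup C hC := (l.map (t2 C hC i j)).prod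

variable (C hC) in
def inD (i j : I) (u : weylGroup C hC) : Prop := ∃ l : List Bool, u = wordP2 C hC i j l

variable {i j : I}

lemma r_al_i : wact C hC (rr C hC i j) (al C i)
    = (C i j * C j i - 1) • al C i - (C i j) • al C j := by
  rw [rr, wact_mul, refl_al, wact_sub, wact_smul, wact_σ_al_self (hC := hC), refl_al]
  module

lemma r_al_j : wact C hC (rr C hC i j) (al C j)
    = (C j i) • al C i - al C j := by
  rw [rr, wact_mul, wact_σ_al_self (hC := hC), wact_neg, refl_al]
  module

lemma wordP2_nil : wordP2 C hC i j ([] : List Bool) = 1 := rfl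

lemma wordP2_cons (b : Bool) (l : List Bool) :
    wordP2 C hC i j (b :: l) = t2 C hC i j b * wordP2 C hC i j l := by
  simp [wordP2]

lemma wordP2_append (l₁ l₂ : List Bool) :
    wordP2 C hC i j (l₁ ++ l₂) = wordP2 C hC i j l₁ * wordP2 C hC i j l₂ := by
  simp [wordP2]

lemma wordP2_concat (l : List Bool) (b : Bool) :
    wordP2 C hC i j (l ++ [b]) = wordP2 C hC i j l * t2 C hC i j b := by
  rw [wordP2_append]; simp [wordP2]

lemma inD_one : inD C hC i j 1 := ⟨[], rfl⟩

lemma inD_mul {u v : weylGroup C hC} (hu : inD C hC i j u) (hv : inD C hC i j v) :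
    inD C hC i j (u * v) := by
  obtain ⟨l₁, rfl⟩ := hu; obtain ⟨l₂, rfl⟩ := hv
  exact ⟨l₁ ++ l₂, (wordP2_append _ _).symm⟩

lemma inD_σi : inD C hC i j (σ C hC i) := ⟨[true], by simp [wordP2, t2]⟩

lemma inD_σj : inD C hC i j (σ C hC j) := ⟨[false], by simp [wordP2, t2]⟩

lemma inD_rr : inD C hC i j (rr C hC i j) := inD_mul inD_σi inD_σj

lemma inD_rr_pow (k : ℕ) : inD C hC i j ((rr C hC i j) ^ k) := by
  induction k with
  | zero => exact inD_one
  | succ k ih => rw [pow_succ]; exact inD_mul ih inD_rr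

lemma inD_tspow (k : ℕ) : inD C hC i j ((σ C hC j * σ C hC i) ^ k) := by
  induction k with
  | zero => exact inD_one
  | succ k ih => rw [pow_succ]; exact inD_mul ih (inD_mul inD_σj inD_σi)

/-- dihedral elements fix vectors vanishing at both coordinates -/
lemma inD_fix {u : weylGroup C hC} (hu : inD C hC i j u) (z : I → ℤ)
    (hzi : z i = 0) (hzj : z j = 0) : wact C hC u z = z := by
  obtain ⟨l, rfl⟩ := hu
  induction l with
  | nil => rfl
  | cons b l ih =>
      rw [wordP2_cons, wact_mul, ih]
      cases b
      · have ht : t2 C hC i j false = σ C hC j := rfl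
        rw [ht, wact_σ, hzj]; simp
      · have ht : t2 C hC i j true = σ C hC i := rfl
        rw [ht, wact_σ, hzi]; simp

include hC in
lemma decomp_zpart (lam : I → ℤ) :
    (((4 - C i j * C j i) • lam - (2 * lam i - C j i * lam j) • al C i
      - (2 * lam j - C i j * lam i) • al C j) i = 0) ∧
    (((4 - C i j * C j i) • lam - (2 * lam i - C j i * lam j) • al C i
      - (2 * lam j - C i j * lam i) • al C j) j = 0) := by
  constructor
  · simp only [Pi.sub_apply, Pi.smul_apply, smul_eq_mul, al_apply]
    rw [hC i]
    ring
  · simp only [Pi.sub_apply, Pi.smul_apply, smul_eq_mul, al_apply]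
    rw [hC j]
    ring

/-- a dihedral element fixing both simple roots is the identity -/
lemma dihedral_fix_all {u : weylGroup C hC}
    (hd : (4:ℤ) - C i j * C j i ≠ 0) (hu : inD C hC i j u)
    (h1 : wact C hC u (al C i) = al C i) (h2 : wact C hC u (al C j) = al C j) : u = 1 := by
  apply weyl_ext
  intro lam
  rw [wact_one]
  have hz := decomp_zpart (hC := hC) (i := i) (j := j) lam
  set z := ((4 - C i j * C j i) • lam - (2 * lam i - C j i * lam j) • al C i
      - (2 * lam j - C i j * lam i) • al C j) with hzdef
  have hdecomp : (4 - C i j * C j i) • lam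
      = (2 * lam i - C j i * lam j) • al C i + (2 * lam j - C i j * lam i) • al C j + z := by
    rw [hzdef]; module
  have hfix : wact C hC u ((4 - C i j * C j i) • lam) = (4 - C i j * C j i) • lam := by
    rw [hdecomp, wact_add, wact_add, wact_smul, wact_smul, h1, h2,
      inD_fix hu z hz.1 hz.2]
  rw [wact_smul] at hfix
  exact smul_right_injective (I → ℤ) hd hfix

include hC in
lemma indep {x y : ℤ} (hd : (4:ℤ) - C i j * C j i ≠ 0)
    (h : x • al C i + y • al C j = 0) : x = 0 ∧ y = 0 := by
  have hi' := congrFun h i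
  have hj' := congrFun h j
  simp only [Pi.add_apply, Pi.smul_apply, smul_eq_mul, al_apply, Pi.zero_apply] at hi' hj'
  rw [hC i] at hi'
  rw [hC j] at hj'
  have hx : (4 - C i j * C j i) * x = 0 := by linear_combination 2 * hi' - C j i * hj'
  have hx0 : x = 0 := by
    rcases mul_eq_zero.1 hx with h' | h'
    · exact absurd h' hd
    · exact h'
  subst hx0
  refine ⟨rfl, ?_⟩
  have h2 : y * 2 = 0 := by linarith
  omega

/-- recurrence for powers of the rotation -/
lemma rr_rec (x : I → ℤ) (hx : x = al C i ∨ x = al C j) (n : ℕ) :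
    wact C hC ((rr C hC i j) ^ (n+2)) x
      = (C i j * C j i - 2) • wact C hC ((rr C hC i j) ^ (n+1)) x
        - wact C hC ((rr C hC i j) ^ n) x := by
  have key : wact C hC (rr C hC i j * rr C hC i j) x
      = (C i j * C j i - 2) • wact C hC (rr C hC i j) x - x := by
    rcases hx with rfl | rfl
    · rw [wact_mul, r_al_i, wact_sub, wact_smul, wact_smul, r_al_i, r_al_j]
      module
    · rw [wact_mul, r_al_j, wact_sub, wact_smul, r_al_i, r_al_j]
      module
  have e1 : ((rr C hC i j) ^ (n+2)) = (rr C hC i j)^n * (rr C hC i j * rr C hC i j) := by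
    rw [← pow_two, ← pow_add]
  rw [e1, wact_mul, key, wact_sub, wact_smul, ← wact_mul, ← pow_succ]

include hC in
lemma ab_nonneg (hC0 : ∀ i' j', i' ≠ j' → C i' j' ≤ 0) (hij : i ≠ j) :
    0 ≤ C i j * C j i := by
  nlinarith [hC0 i j hij, hC0 j i (Ne.symm hij)]

include hC in
lemma ab_le_three (hC0 : ∀ i' j', i' ≠ j' → C i' j' ≤ 0)
    (hCsym : ∀ i' j', C i' j' = 0 ↔ C j' i' = 0) (hij : i ≠ j) :
    C i j * C j i ≤ 3 := by
  by_contra hP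
  push_neg at hP
  have hP4 : 4 ≤ C i j * C j i := hP
  set r := rr C hC i j with hrdef
  have hfin : ¬ Function.Injective (fun n : ℕ => r ^ n) := by
    intro hinj
    obtain ⟨n, m, hnm, h⟩ := Finite.exists_ne_map_eq_of_infinite (fun n : ℕ => r ^ n)
    exact hnm (hinj h)
  apply hfin
  rcases eq_or_lt_of_le hP4 with hP4' | hP5
  · -- C i j * C j i = 4 : unipotent case
    set δ := wact C hC r (al C i) - al C i with hδ
    have hdrift : ∀ n : ℕ, wact C hC (r ^ n) (al C i) = al C i + (n : ℤ) • δ := by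
      intro n
      induction n using Nat.strong_induction_on with
      | _ n ih =>
        rcases n with _ | n
        · simp [wact_one]
        rcases n with _ | n
        · rw [pow_one, hδ]; push_cast; module
        have h2 := rr_rec (hC := hC) (i := i) (j := j) (al C i) (Or.inl rfl) n
        rw [← hrdef] at h2
        rw [show n + 1 + 1 = n + 2 by omega, h2, ih (n+1) (by omega), ih n (by omega), ← hP4']
        push_cast
        module
    have hδ0 : δ ≠ 0 := by
      intro h0
      have h1 : wact C hC r (al C i) = al C i := sub_eq_zero.1 h0
      rw [hrdef, r_al_i] at h1
      have h2 : (C i j * C j i - 2) • al C i + (- C i j) • al C j = 0 := by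
        rw [show (C i j * C j i - 2) • al C i + (- C i j) • al C j
          = ((C i j * C j i - 1) • al C i - C i j • al C j) - al C i by module, h1, sub_self]
      have hkey : ∀ x : I → ℤ, (C i j * C j i - 2) * (BB C hC (al C i) (al C i) * x i)
          + (- C i j) * (BB C hC (al C j) (al C j) * x j) = 0 := by
        intro x
        have h3 : BB C hC ((C i j * C j i - 2) • al C i + (- C i j) • al C j) x = 0 := by
          rw [h2, BB_zero_left]
        rw [BB_add_left, BB_smul_left, BB_smul_left] at h3
        have e1 := BB_al (C := C) (hC := hC) i x
        have e2 := BB_al (C := C) (hC := hC) j x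
        linear_combination (-(C i j * C j i - 2)) * e1 + C i j * e2 + 2 * h3
      have hx := hkey (fun k => if k = i then 1 else 0)
      rw [if_pos rfl, if_neg (Ne.symm hij)] at hx
      rw [← hP4'] at hx
      have hbal := bal_pos (C := C) (hC := hC) i
      nlinarith [hx, hbal]
    obtain ⟨k0, hk0⟩ : ∃ k0, δ k0 ≠ 0 := by
      by_contra h
      push_neg at h
      exact hδ0 (funext h)
    intro n m hnm
    have h1 := congrFun (hdrift n) k0
    have h2 := congrFun (hdrift m) k0
    rw [show r ^ n = r ^ m from hnm] at h1
    rw [h1] at h2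
    simp only [Pi.add_apply, Pi.smul_apply, smul_eq_mul] at h2
    have hcast : (n : ℤ) = m := by
      have h3 : (m : ℤ) * δ k0 = (n : ℤ) * δ k0 := by linarith
      have := mul_right_cancel₀ hk0 h3
      omega
    exact_mod_cast hcast
  · -- C i j * C j i ≥ 5 : growth case
    set v : ℕ → ℤ := fun n => wact C hC (r ^ n) (al C i) i with hv
    have hv0 : v 0 = 2 := by
      simp only [hv, pow_zero, wact_one]
      exact al_self (hC := hC) i
    have hv1 : v 1 = C i j * C j i - 2 := by
      simp only [hv, pow_one, hrdef]
      rw [r_al_i]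
      simp only [Pi.sub_apply, Pi.smul_apply, smul_eq_mul, al_apply]
      rw [hC i]
      ring
    have hrec : ∀ n, v (n + 2) = (C i j * C j i - 2) * v (n+1) - v n := by
      intro n
      simp only [hv]
      have h2 := rr_rec (hC := hC) (i := i) (j := j) (al C i) (Or.inl rfl) n
      rw [← hrdef] at h2
      rw [h2]
      simp only [Pi.sub_apply, Pi.smul_apply, smul_eq_mul]
    have hmono : ∀ n, v n < v (n + 1) ∧ 2 ≤ v n := by
      intro n
      induction n with
      | zero => rw [hv0, hv1]; omega
      | succ n ih =>
          obtain ⟨ih1, ih2⟩ := ih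
          have h2 : 2 ≤ v (n+1) := by omega
          refine ⟨?_, h2⟩
          rw [hrec n]
          nlinarith
    have hsm : StrictMono v := strictMono_nat_of_lt_succ (fun n => (hmono n).1)
    intro n m hnm
    exact hsm.injective
      (congrArg (fun u : weylGroup C hC => wact C hC u (al C i) i) (hnm : r ^ n = r ^ m))


lemma order_resolve {u : weylGroup C hC} {m : ℕ} (hm0 : 0 < m) (hm : u ^ m = 1)
    (hsub : ∀ d, 0 < d → d < m → d ∣ m → u ^ d ≠ 1) : orderOf u = m := by
  have ho := orderOf_dvd_of_pow_eq_one hm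
  have hpos : 0 < orderOf u := orderOf_pos u
  rcases lt_or_eq_of_le (Nat.le_of_dvd hm0 ho) with h | h
  · exact absurd (pow_orderOf_eq_one u) (hsub _ hpos h ho)
  · exact h

include hC in
lemma act_ne_one {u : weylGroup C hC} (hd : (4:ℤ) - C i j * C j i ≠ 0) {c₁ c₂ : ℤ}
    (he : wact C hC u (al C i) = c₁ • al C i + c₂ • al C j) (hne : ¬(c₁ = 1 ∧ c₂ = 0)) :
    u ≠ 1 := by
  intro h
  rw [h, wact_one] at he
  have h2 : (c₁ - 1) • al C i + c₂ • al C j = 0 := by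
    rw [show (c₁ - 1) • al C i + c₂ • al C j = (c₁ • al C i + c₂ • al C j) - al C i by module,
      ← he, sub_self]
  obtain ⟨ha, hb⟩ := indep (hC := hC) hd h2
  exact hne ⟨by omega, hb⟩

include hC in
lemma dihedral_geo (hC0 : ∀ i' j', i' ≠ j' → C i' j' ≤ 0)
    (hCsym : ∀ i' j', C i' j' = 0 ↔ C j' i' = 0) (hij : i ≠ j) :
    (∀ k, 2*k < orderOf (rr C hC i j) → ∃ p q : ℕ, 0 < p + q ∧
        wact C hC ((rr C hC i j)^k) (al C i) = (p:ℤ) • al C i + (q:ℤ) • al C j) ∧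
    (∀ k, k < orderOf (rr C hC i j) → orderOf (rr C hC i j) ≤ 2*k → ∃ p q : ℕ, 0 < p + q ∧
        wact C hC ((rr C hC i j)^k) (al C i) = -((p:ℤ) • al C i + (q:ℤ) • al C j)) := by
  have hab3 := ab_le_three (hC := hC) hC0 hCsym hij
  have hA0 : C i j ≤ 0 := hC0 i j hij
  have hB0 : C j i ≤ 0 := hC0 j i (Ne.symm hij)
  by_cases hz : C i j = 0
  case pos =>
    have hA : C i j = 0 := hz
    have hB : C j i = 0 := (hCsym i j).1 hz
    have hd : (4:ℤ) - C i j * C j i ≠ 0 := by rw [hA, hB]; norm_num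
    have p1i : wact C hC (rr C hC i j) (al C i) = (-1:ℤ) • al C i + (0:ℤ) • al C j := by
      rw [r_al_i, hA, hB]; module
    have p1j : wact C hC (rr C hC i j) (al C j) = (0:ℤ) • al C i + (-1:ℤ) • al C j := by
      rw [r_al_j, hB]; module
    have e1i : wact C hC (rr C hC i j ^ 1) (al C i) = (-1:ℤ) • al C i + (0:ℤ) • al C j := by
      rw [pow_one]; exact p1i
    have e1j : wact C hC (rr C hC i j ^ 1) (al C j) = (0:ℤ) • al C i + (-1:ℤ) • al C j := by
      rw [pow_one]; exact p1j
    have e2i : wact C hC (rr C hC i j ^ 2) (al C i) = (1:ℤ) • al C i + (0:ℤ) • al C j := by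
      rw [show (2:ℕ) = 1 + 1 from rfl, pow_succ', wact_mul, e1i, wact_comb, p1i, p1j]; module
    have e2j : wact C hC (rr C hC i j ^ 2) (al C j) = (0:ℤ) • al C i + (1:ℤ) • al C j := by
      rw [show (2:ℕ) = 1 + 1 from rfl, pow_succ', wact_mul, e1j, wact_comb, p1i, p1j]; module
    have hrm : rr C hC i j ^ 2 = 1 :=
      dihedral_fix_all (hC := hC) hd (inD_rr_pow 2) (by rw [e2i]; module) (by rw [e2j]; module)
    have hord : orderOf (rr C hC i j) = 2 := by
      apply order_resolve (by norm_num) hrm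
      intro d hd0 hdm hdvd
      interval_cases d
      · exact act_ne_one (hC := hC) hd e1i (by norm_num)
    refine ⟨?_, ?_⟩
    · intro k hk
      rw [hord] at hk
      have hkub : k ≤ 0 := by omega
      interval_cases k
      · exact ⟨1, 0, by norm_num, by rw [pow_zero, wact_one]; push_cast; module⟩
    · intro k hk1 hk2
      rw [hord] at hk1 hk2
      have hklb : 1 ≤ k := by omega
      interval_cases k
      · exact ⟨1, 0, by norm_num, by rw [e1i]; push_cast; module⟩
  case neg =>
    have hBz : C j i ≠ 0 := fun h => hz ((hCsym j i).1 h)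
    have h1 : C i j ≤ -1 := by omega
    have h2 : C j i ≤ -1 := by omega
    have h3 : -3 ≤ C i j := by nlinarith
    have h4 : -3 ≤ C j i := by nlinarith
    have hAc : C i j = -1 ∨ C i j = -2 ∨ C i j = -3 := by omega
    rcases hAc with hA | hA | hA
    · have hBc : C j i = -1 ∨ C j i = -2 ∨ C j i = -3 := by omega
      rcases hBc with hB | hB | hB
      · -- (-1,-1)
        have hd : (4:ℤ) - C i j * C j i ≠ 0 := by rw [hA, hB]; norm_num
        have p1i : wact C hC (rr C hC i j) (al C i) = (0:ℤ) • al C i + (1:ℤ) • al C j := by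
          rw [r_al_i, hA, hB]; module
        have p1j : wact C hC (rr C hC i j) (al C j) = (-1:ℤ) • al C i + (-1:ℤ) • al C j := by
          rw [r_al_j, hB]; module
        have e1i : wact C hC (rr C hC i j ^ 1) (al C i) = (0:ℤ) • al C i + (1:ℤ) • al C j := by
          rw [pow_one]; exact p1i
        have e1j : wact C hC (rr C hC i j ^ 1) (al C j) = (-1:ℤ) • al C i + (-1:ℤ) • al C j := by
          rw [pow_one]; exact p1j
        have e2i : wact C hC (rr C hC i j ^ 2) (al C i) = (-1:ℤ) • al C i + (-1:ℤ) • al C j := by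
          rw [show (2:ℕ) = 1 + 1 from rfl, pow_succ', wact_mul, e1i, wact_comb, p1i, p1j]; module
        have e3i : wact C hC (rr C hC i j ^ 3) (al C i) = (1:ℤ) • al C i + (0:ℤ) • al C j := by
          rw [show (3:ℕ) = 2 + 1 from rfl, pow_succ', wact_mul, e2i, wact_comb, p1i, p1j]; module
        have e2j : wact C hC (rr C hC i j ^ 2) (al C j) = (1:ℤ) • al C i + (0:ℤ) • al C j := by
          rw [show (2:ℕ) = 1 + 1 from rfl, pow_succ', wact_mul, e1j, wact_comb, p1i, p1j]; module
        have e3j : wact C hC (rr C hC i j ^ 3) (al C j) = (0:ℤ) • al C i + (1:ℤ) • al C j := by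
          rw [show (3:ℕ) = 2 + 1 from rfl, pow_succ', wact_mul, e2j, wact_comb, p1i, p1j]; module
        have hrm : rr C hC i j ^ 3 = 1 :=
          dihedral_fix_all (hC := hC) hd (inD_rr_pow 3) (by rw [e3i]; module) (by rw [e3j]; module)
        have hord : orderOf (rr C hC i j) = 3 := by
          apply order_resolve (by norm_num) hrm
          intro d hd0 hdm hdvd
          interval_cases d
          · exact act_ne_one (hC := hC) hd e1i (by norm_num)
          · exact absurd hdvd (by norm_num)
        refine ⟨?_, ?_⟩
        · intro k hk
          rw [hord] at hk
          have hkub : k ≤ 1 := by omega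
          interval_cases k
          · exact ⟨1, 0, by norm_num, by rw [pow_zero, wact_one]; push_cast; module⟩
          · exact ⟨0, 1, by norm_num, by rw [e1i]; push_cast; module⟩
        · intro k hk1 hk2
          rw [hord] at hk1 hk2
          have hklb : 2 ≤ k := by omega
          interval_cases k
          · exact ⟨1, 1, by norm_num, by rw [e2i]; push_cast; module⟩
      · -- (-1,-2)
        have hd : (4:ℤ) - C i j * C j i ≠ 0 := by rw [hA, hB]; norm_num
        have p1i : wact C hC (rr C hC i j) (al C i) = (1:ℤ) • al C i + (1:ℤ) • al C j := by
          rw [r_al_i, hA, hB]; module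
        have p1j : wact C hC (rr C hC i j) (al C j) = (-2:ℤ) • al C i + (-1:ℤ) • al C j := by
          rw [r_al_j, hB]; module
        have e1i : wact C hC (rr C hC i j ^ 1) (al C i) = (1:ℤ) • al C i + (1:ℤ) • al C j := by
          rw [pow_one]; exact p1i
        have e1j : wact C hC (rr C hC i j ^ 1) (al C j) = (-2:ℤ) • al C i + (-1:ℤ) • al C j := by
          rw [pow_one]; exact p1j
        have e2i : wact C hC (rr C hC i j ^ 2) (al C i) = (-1:ℤ) • al C i + (0:ℤ) • al C j := by
          rw [show (2:ℕ) = 1 + 1 from rfl, pow_succ', wact_mul, e1i, wact_comb, p1i, p1j]; module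
        have e3i : wact C hC (rr C hC i j ^ 3) (al C i) = (-1:ℤ) • al C i + (-1:ℤ) • al C j := by
          rw [show (3:ℕ) = 2 + 1 from rfl, pow_succ', wact_mul, e2i, wact_comb, p1i, p1j]; module
        have e4i : wact C hC (rr C hC i j ^ 4) (al C i) = (1:ℤ) • al C i + (0:ℤ) • al C j := by
          rw [show (4:ℕ) = 3 + 1 from rfl, pow_succ', wact_mul, e3i, wact_comb, p1i, p1j]; module
        have e2j : wact C hC (rr C hC i j ^ 2) (al C j) = (0:ℤ) • al C i + (-1:ℤ) • al C j := by
          rw [show (2:ℕ) = 1 + 1 from rfl, pow_succ', wact_mul, e1j, wact_comb, p1i, p1j]; module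
        have e3j : wact C hC (rr C hC i j ^ 3) (al C j) = (2:ℤ) • al C i + (1:ℤ) • al C j := by
          rw [show (3:ℕ) = 2 + 1 from rfl, pow_succ', wact_mul, e2j, wact_comb, p1i, p1j]; module
        have e4j : wact C hC (rr C hC i j ^ 4) (al C j) = (0:ℤ) • al C i + (1:ℤ) • al C j := by
          rw [show (4:ℕ) = 3 + 1 from rfl, pow_succ', wact_mul, e3j, wact_comb, p1i, p1j]; module
        have hrm : rr C hC i j ^ 4 = 1 :=
          dihedral_fix_all (hC := hC) hd (inD_rr_pow 4) (by rw [e4i]; module) (by rw [e4j]; module)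
        have hord : orderOf (rr C hC i j) = 4 := by
          apply order_resolve (by norm_num) hrm
          intro d hd0 hdm hdvd
          interval_cases d
          · exact act_ne_one (hC := hC) hd e1i (by norm_num)
          · exact act_ne_one (hC := hC) hd e2i (by norm_num)
          · exact absurd hdvd (by norm_num)
        refine ⟨?_, ?_⟩
        · intro k hk
          rw [hord] at hk
          have hkub : k ≤ 1 := by omega
          interval_cases k
          · exact ⟨1, 0, by norm_num, by rw [pow_zero, wact_one]; push_cast; module⟩
          · exact ⟨1, 1, by norm_num, by rw [e1i]; push_cast; module⟩
        · intro k hk1 hk2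
          rw [hord] at hk1 hk2
          have hklb : 2 ≤ k := by omega
          interval_cases k
          · exact ⟨1, 0, by norm_num, by rw [e2i]; push_cast; module⟩
          · exact ⟨1, 1, by norm_num, by rw [e3i]; push_cast; module⟩
      · -- (-1,-3)
        have hd : (4:ℤ) - C i j * C j i ≠ 0 := by rw [hA, hB]; norm_num
        have p1i : wact C hC (rr C hC i j) (al C i) = (2:ℤ) • al C i + (1:ℤ) • al C j := by
          rw [r_al_i, hA, hB]; module
        have p1j : wact C hC (rr C hC i j) (al C j) = (-3:ℤ) • al C i + (-1:ℤ) • al C j := by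
          rw [r_al_j, hB]; module
        have e1i : wact C hC (rr C hC i j ^ 1) (al C i) = (2:ℤ) • al C i + (1:ℤ) • al C j := by
          rw [pow_one]; exact p1i
        have e1j : wact C hC (rr C hC i j ^ 1) (al C j) = (-3:ℤ) • al C i + (-1:ℤ) • al C j := by
          rw [pow_one]; exact p1j
        have e2i : wact C hC (rr C hC i j ^ 2) (al C i) = (1:ℤ) • al C i + (1:ℤ) • al C j := by
          rw [show (2:ℕ) = 1 + 1 from rfl, pow_succ', wact_mul, e1i, wact_comb, p1i, p1j]; module
        have e3i : wact C hC (rr C hC i j ^ 3) (al C i) = (-1:ℤ) • al C i + (0:ℤ) • al C j := by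
          rw [show (3:ℕ) = 2 + 1 from rfl, pow_succ', wact_mul, e2i, wact_comb, p1i, p1j]; module
        have e4i : wact C hC (rr C hC i j ^ 4) (al C i) = (-2:ℤ) • al C i + (-1:ℤ) • al C j := by
          rw [show (4:ℕ) = 3 + 1 from rfl, pow_succ', wact_mul, e3i, wact_comb, p1i, p1j]; module
        have e5i : wact C hC (rr C hC i j ^ 5) (al C i) = (-1:ℤ) • al C i + (-1:ℤ) • al C j := by
          rw [show (5:ℕ) = 4 + 1 from rfl, pow_succ', wact_mul, e4i, wact_comb, p1i, p1j]; module
        have e6i : wact C hC (rr C hC i j ^ 6) (al C i) = (1:ℤ) • al C i + (0:ℤ) • al C j := by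
          rw [show (6:ℕ) = 5 + 1 from rfl, pow_succ', wact_mul, e5i, wact_comb, p1i, p1j]; module
        have e2j : wact C hC (rr C hC i j ^ 2) (al C j) = (-3:ℤ) • al C i + (-2:ℤ) • al C j := by
          rw [show (2:ℕ) = 1 + 1 from rfl, pow_succ', wact_mul, e1j, wact_comb, p1i, p1j]; module
        have e3j : wact C hC (rr C hC i j ^ 3) (al C j) = (0:ℤ) • al C i + (-1:ℤ) • al C j := by
          rw [show (3:ℕ) = 2 + 1 from rfl, pow_succ', wact_mul, e2j, wact_comb, p1i, p1j]; module
        have e4j : wact C hC (rr C hC i j ^ 4) (al C j) = (3:ℤ) • al C i + (1:ℤ) • al C j := by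
          rw [show (4:ℕ) = 3 + 1 from rfl, pow_succ', wact_mul, e3j, wact_comb, p1i, p1j]; module
        have e5j : wact C hC (rr C hC i j ^ 5) (al C j) = (3:ℤ) • al C i + (2:ℤ) • al C j := by
          rw [show (5:ℕ) = 4 + 1 from rfl, pow_succ', wact_mul, e4j, wact_comb, p1i, p1j]; module
        have e6j : wact C hC (rr C hC i j ^ 6) (al C j) = (0:ℤ) • al C i + (1:ℤ) • al C j := by
          rw [show (6:ℕ) = 5 + 1 from rfl, pow_succ', wact_mul, e5j, wact_comb, p1i, p1j]; module
        have hrm : rr C hC i j ^ 6 = 1 :=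
          dihedral_fix_all (hC := hC) hd (inD_rr_pow 6) (by rw [e6i]; module) (by rw [e6j]; module)
        have hord : orderOf (rr C hC i j) = 6 := by
          apply order_resolve (by norm_num) hrm
          intro d hd0 hdm hdvd
          interval_cases d
          · exact act_ne_one (hC := hC) hd e1i (by norm_num)
          · exact act_ne_one (hC := hC) hd e2i (by norm_num)
          · exact act_ne_one (hC := hC) hd e3i (by norm_num)
          · exact absurd hdvd (by norm_num)
          · exact absurd hdvd (by norm_num)
        refine ⟨?_, ?_⟩
        · intro k hk
          rw [hord] at hk
          have hkub : k ≤ 2 := by omega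
          interval_cases k
          · exact ⟨1, 0, by norm_num, by rw [pow_zero, wact_one]; push_cast; module⟩
          · exact ⟨2, 1, by norm_num, by rw [e1i]; push_cast; module⟩
          · exact ⟨1, 1, by norm_num, by rw [e2i]; push_cast; module⟩
        · intro k hk1 hk2
          rw [hord] at hk1 hk2
          have hklb : 3 ≤ k := by omega
          interval_cases k
          · exact ⟨1, 0, by norm_num, by rw [e3i]; push_cast; module⟩
          · exact ⟨2, 1, by norm_num, by rw [e4i]; push_cast; module⟩
          · exact ⟨1, 1, by norm_num, by rw [e5i]; push_cast; module⟩
    · have hB : C j i = -1 := by rw [hA] at hab3; omega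
      -- (-2,-1)
      have hd : (4:ℤ) - C i j * C j i ≠ 0 := by rw [hA, hB]; norm_num
      have p1i : wact C hC (rr C hC i j) (al C i) = (1:ℤ) • al C i + (2:ℤ) • al C j := by
        rw [r_al_i, hA, hB]; module
      have p1j : wact C hC (rr C hC i j) (al C j) = (-1:ℤ) • al C i + (-1:ℤ) • al C j := by
        rw [r_al_j, hB]; module
      have e1i : wact C hC (rr C hC i j ^ 1) (al C i) = (1:ℤ) • al C i + (2:ℤ) • al C j := by
        rw [pow_one]; exact p1i
      have e1j : wact C hC (rr C hC i j ^ 1) (al C j) = (-1:ℤ) • al C i + (-1:ℤ) • al C j := by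
        rw [pow_one]; exact p1j
      have e2i : wact C hC (rr C hC i j ^ 2) (al C i) = (-1:ℤ) • al C i + (0:ℤ) • al C j := by
        rw [show (2:ℕ) = 1 + 1 from rfl, pow_succ', wact_mul, e1i, wact_comb, p1i, p1j]; module
      have e3i : wact C hC (rr C hC i j ^ 3) (al C i) = (-1:ℤ) • al C i + (-2:ℤ) • al C j := by
        rw [show (3:ℕ) = 2 + 1 from rfl, pow_succ', wact_mul, e2i, wact_comb, p1i, p1j]; module
      have e4i : wact C hC (rr C hC i j ^ 4) (al C i) = (1:ℤ) • al C i + (0:ℤ) • al C j := by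
        rw [show (4:ℕ) = 3 + 1 from rfl, pow_succ', wact_mul, e3i, wact_comb, p1i, p1j]; module
      have e2j : wact C hC (rr C hC i j ^ 2) (al C j) = (0:ℤ) • al C i + (-1:ℤ) • al C j := by
        rw [show (2:ℕ) = 1 + 1 from rfl, pow_succ', wact_mul, e1j, wact_comb, p1i, p1j]; module
      have e3j : wact C hC (rr C hC i j ^ 3) (al C j) = (1:ℤ) • al C i + (1:ℤ) • al C j := by
        rw [show (3:ℕ) = 2 + 1 from rfl, pow_succ', wact_mul, e2j, wact_comb, p1i, p1j]; module
      have e4j : wact C hC (rr C hC i j ^ 4) (al C j) = (0:ℤ) • al C i + (1:ℤ) • al C j := by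
        rw [show (4:ℕ) = 3 + 1 from rfl, pow_succ', wact_mul, e3j, wact_comb, p1i, p1j]; module
      have hrm : rr C hC i j ^ 4 = 1 :=
        dihedral_fix_all (hC := hC) hd (inD_rr_pow 4) (by rw [e4i]; module) (by rw [e4j]; module)
      have hord : orderOf (rr C hC i j) = 4 := by
        apply order_resolve (by norm_num) hrm
        intro d hd0 hdm hdvd
        interval_cases d
        · exact act_ne_one (hC := hC) hd e1i (by norm_num)
        · exact act_ne_one (hC := hC) hd e2i (by norm_num)
        · exact absurd hdvd (by norm_num)
      refine ⟨?_, ?_⟩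
      · intro k hk
        rw [hord] at hk
        have hkub : k ≤ 1 := by omega
        interval_cases k
        · exact ⟨1, 0, by norm_num, by rw [pow_zero, wact_one]; push_cast; module⟩
        · exact ⟨1, 2, by norm_num, by rw [e1i]; push_cast; module⟩
      · intro k hk1 hk2
        rw [hord] at hk1 hk2
        have hklb : 2 ≤ k := by omega
        interval_cases k
        · exact ⟨1, 0, by norm_num, by rw [e2i]; push_cast; module⟩
        · exact ⟨1, 2, by norm_num, by rw [e3i]; push_cast; module⟩
    · have hB : C j i = -1 := by rw [hA] at hab3; omega
      -- (-3,-1)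
      have hd : (4:ℤ) - C i j * C j i ≠ 0 := by rw [hA, hB]; norm_num
      have p1i : wact C hC (rr C hC i j) (al C i) = (2:ℤ) • al C i + (3:ℤ) • al C j := by
        rw [r_al_i, hA, hB]; module
      have p1j : wact C hC (rr C hC i j) (al C j) = (-1:ℤ) • al C i + (-1:ℤ) • al C j := by
        rw [r_al_j, hB]; module
      have e1i : wact C hC (rr C hC i j ^ 1) (al C i) = (2:ℤ) • al C i + (3:ℤ) • al C j := by
        rw [pow_one]; exact p1i
      have e1j : wact C hC (rr C hC i j ^ 1) (al C j) = (-1:ℤ) • al C i + (-1:ℤ) • al C j := by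
        rw [pow_one]; exact p1j
      have e2i : wact C hC (rr C hC i j ^ 2) (al C i) = (1:ℤ) • al C i + (3:ℤ) • al C j := by
        rw [show (2:ℕ) = 1 + 1 from rfl, pow_succ', wact_mul, e1i, wact_comb, p1i, p1j]; module
      have e3i : wact C hC (rr C hC i j ^ 3) (al C i) = (-1:ℤ) • al C i + (0:ℤ) • al C j := by
        rw [show (3:ℕ) = 2 + 1 from rfl, pow_succ', wact_mul, e2i, wact_comb, p1i, p1j]; module
      have e4i : wact C hC (rr C hC i j ^ 4) (al C i) = (-2:ℤ) • al C i + (-3:ℤ) • al C j := by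
        rw [show (4:ℕ) = 3 + 1 from rfl, pow_succ', wact_mul, e3i, wact_comb, p1i, p1j]; module
      have e5i : wact C hC (rr C hC i j ^ 5) (al C i) = (-1:ℤ) • al C i + (-3:ℤ) • al C j := by
        rw [show (5:ℕ) = 4 + 1 from rfl, pow_succ', wact_mul, e4i, wact_comb, p1i, p1j]; module
      have e6i : wact C hC (rr C hC i j ^ 6) (al C i) = (1:ℤ) • al C i + (0:ℤ) • al C j := by
        rw [show (6:ℕ) = 5 + 1 from rfl, pow_succ', wact_mul, e5i, wact_comb, p1i, p1j]; module
      have e2j : wact C hC (rr C hC i j ^ 2) (al C j) = (-1:ℤ) • al C i + (-2:ℤ) • al C j := by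
        rw [show (2:ℕ) = 1 + 1 from rfl, pow_succ', wact_mul, e1j, wact_comb, p1i, p1j]; module
      have e3j : wact C hC (rr C hC i j ^ 3) (al C j) = (0:ℤ) • al C i + (-1:ℤ) • al C j := by
        rw [show (3:ℕ) = 2 + 1 from rfl, pow_succ', wact_mul, e2j, wact_comb, p1i, p1j]; module
      have e4j : wact C hC (rr C hC i j ^ 4) (al C j) = (1:ℤ) • al C i + (1:ℤ) • al C j := by
        rw [show (4:ℕ) = 3 + 1 from rfl, pow_succ', wact_mul, e3j, wact_comb, p1i, p1j]; module
      have e5j : wact C hC (rr C hC i j ^ 5) (al C j) = (1:ℤ) • al C i + (2:ℤ) • al C j := by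
        rw [show (5:ℕ) = 4 + 1 from rfl, pow_succ', wact_mul, e4j, wact_comb, p1i, p1j]; module
      have e6j : wact C hC (rr C hC i j ^ 6) (al C j) = (0:ℤ) • al C i + (1:ℤ) • al C j := by
        rw [show (6:ℕ) = 5 + 1 from rfl, pow_succ', wact_mul, e5j, wact_comb, p1i, p1j]; module
      have hrm : rr C hC i j ^ 6 = 1 :=
        dihedral_fix_all (hC := hC) hd (inD_rr_pow 6) (by rw [e6i]; module) (by rw [e6j]; module)
      have hord : orderOf (rr C hC i j) = 6 := by
        apply order_resolve (by norm_num) hrm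
        intro d hd0 hdm hdvd
        interval_cases d
        · exact act_ne_one (hC := hC) hd e1i (by norm_num)
        · exact act_ne_one (hC := hC) hd e2i (by norm_num)
        · exact act_ne_one (hC := hC) hd e3i (by norm_num)
        · exact absurd hdvd (by norm_num)
        · exact absurd hdvd (by norm_num)
      refine ⟨?_, ?_⟩
      · intro k hk
        rw [hord] at hk
        have hkub : k ≤ 2 := by omega
        interval_cases k
        · exact ⟨1, 0, by norm_num, by rw [pow_zero, wact_one]; push_cast; module⟩
        · exact ⟨2, 3, by norm_num, by rw [e1i]; push_cast; module⟩
        · exact ⟨1, 3, by norm_num, by rw [e2i]; push_cast; module⟩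
      · intro k hk1 hk2
        rw [hord] at hk1 hk2
        have hklb : 3 ≤ k := by omega
        interval_cases k
        · exact ⟨1, 0, by norm_num, by rw [e3i]; push_cast; module⟩
        · exact ⟨2, 3, by norm_num, by rw [e4i]; push_cast; module⟩
        · exact ⟨1, 3, by norm_num, by rw [e5i]; push_cast; module⟩



/-! ### dihedral length theory -/

variable (C hC) in
noncomputable def len2 (i j : I) (u : weylGroup C hC) : ℕ :=
  sInf {n | ∃ l : List Bool, l.length = n ∧ u = wordP2 C hC i j l}

variable (C hC) in
def cn (i j : I) (k : ℕ) : Bool → weylGroup C hC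
  | true => rr C hC i j ^ k * σ C hC i
  | false => rr C hC i j ^ k

def clen (m k : ℕ) : Bool → ℕ
  | true => min (2*k+1) (2*(m-k)-1)
  | false => min (2*k) (2*(m-k))

lemma len2_le {u : weylGroup C hC} {l : List Bool} (h : u = wordP2 C hC i j l) :
    len2 C hC i j u ≤ l.length :=
  Nat.sInf_le ⟨l, rfl, h⟩

lemma len2_spec {u : weylGroup C hC} (hu : inD C hC i j u) :
    ∃ l : List Bool, l.length = len2 C hC i j u ∧ u = wordP2 C hC i j l := by
  obtain ⟨l, hl⟩ := hu
  have hne : {n | ∃ l : List Bool, l.length = n ∧ u = wordP2 C hC i j l}.Nonempty :=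
    ⟨l.length, l, rfl, hl⟩
  exact Nat.sInf_mem hne

lemma inD_cn (k : ℕ) (typ : Bool) : inD C hC i j (cn C hC i j k typ) := by
  cases typ
  · exact inD_rr_pow k
  · exact inD_mul (inD_rr_pow k) inD_σi

lemma t2_true : t2 C hC i j true = σ C hC i := rfl
lemma t2_false : t2 C hC i j false = σ C hC j := rfl

lemma len2_mul_letter {u : weylGroup C hC} (hu : inD C hC i j u) (b : Bool) :
    len2 C hC i j (u * t2 C hC i j b) ≤ len2 C hC i j u + 1 := by
  obtain ⟨l, hl, he⟩ := len2_spec hu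
  have : u * t2 C hC i j b = wordP2 C hC i j (l ++ [b]) := by rw [wordP2_concat, ← he]
  calc len2 C hC i j (u * t2 C hC i j b) ≤ (l ++ [b]).length := len2_le this
    _ = len2 C hC i j u + 1 := by rw [List.length_append, hl]; rfl

lemma len2_letter_mul {u : weylGroup C hC} (hu : inD C hC i j u) (b : Bool) :
    len2 C hC i j (t2 C hC i j b * u) ≤ len2 C hC i j u + 1 := by
  obtain ⟨l, hl, he⟩ := len2_spec hu
  have : t2 C hC i j b * u = wordP2 C hC i j (b :: l) := by rw [wordP2_cons, ← he]
  calc len2 C hC i j (t2 C hC i j b * u) ≤ (b :: l).length := len2_le this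
    _ = len2 C hC i j u + 1 := by rw [List.length_cons, hl]

lemma len2_eq_zero {u : weylGroup C hC} (hu : inD C hC i j u) (h : len2 C hC i j u = 0) :
    u = 1 := by
  obtain ⟨l, hl, he⟩ := len2_spec hu
  rw [h] at hl
  rw [he, List.length_eq_zero_iff.1 hl, wordP2_nil]

lemma wordP2_eq_wordP (l : List Bool) :
    wordP2 C hC i j l = wordP C hC (l.map (fun b => if b then i else j)) := by
  induction l with
  | nil => rfl
  | cons b l ih =>
      rw [wordP2_cons, List.map_cons, wordP_cons, ih]
      congr 1
      cases b
      · rfl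
      · rfl

lemma len_le_len2 {u : weylGroup C hC} (hu : inD C hC i j u) :
    len C hC u ≤ len2 C hC i j u := by
  obtain ⟨l, hl, he⟩ := len2_spec hu
  rw [← hl]
  rw [wordP2_eq_wordP] at he
  calc len C hC u ≤ (l.map (fun b => if b then i else j)).length := len_le he
    _ = l.length := List.length_map _

/-- group identities -/
lemma rt_eq_s : rr C hC i j * σ C hC j = σ C hC i := by
  rw [rr, mul_assoc, σ_mul_self, mul_one]

lemma rs_pow_succ (k : ℕ) : rr C hC i j ^ (k+1) * σ C hC j = rr C hC i j ^ k * σ C hC i := by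
  rw [pow_succ, mul_assoc, rt_eq_s]

lemma ts_eq_rr_inv : σ C hC j * σ C hC i = (rr C hC i j)⁻¹ := by
  rw [rr, mul_inv_rev, σ_inv, σ_inv]

lemma tspow_eq_rrpow {k : ℕ} (hk : k ≤ orderOf (rr C hC i j)) :
    (σ C hC j * σ C hC i) ^ (orderOf (rr C hC i j) - k) = rr C hC i j ^ k := by
  rw [ts_eq_rr_inv, inv_pow]
  apply inv_eq_of_mul_eq_one_right
  rw [← pow_add, show orderOf (rr C hC i j) - k + k = orderOf (rr C hC i j) by omega]
  exact pow_orderOf_eq_one _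

lemma σj_eq_cn : σ C hC j = rr C hC i j ^ (orderOf (rr C hC i j) - 1) * σ C hC i := by
  have hm : 0 < orderOf (rr C hC i j) := orderOf_pos _
  have h1 : rr C hC i j ^ (orderOf (rr C hC i j) - 1) = (rr C hC i j)⁻¹ := by
    apply eq_inv_of_mul_eq_one_left
    rw [← pow_succ, show orderOf (rr C hC i j) - 1 + 1 = orderOf (rr C hC i j) by omega]
    exact pow_orderOf_eq_one _
  rw [h1, ← ts_eq_rr_inv, mul_assoc, σ_mul_self, mul_one]

/-- transition table for canonical forms -/
lemma cn_table {k : ℕ} (hk : k < orderOf (rr C hC i j)) (typ b : Bool) :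
    ∃ k₁ typ₁, k₁ < orderOf (rr C hC i j) ∧
      cn C hC i j k typ * t2 C hC i j b = cn C hC i j k₁ typ₁ ∧
      clen (orderOf (rr C hC i j)) k₁ typ₁ ≤ clen (orderOf (rr C hC i j)) k typ + 1 := by
  have hm : 0 < orderOf (rr C hC i j) := orderOf_pos _
  cases typ
  · cases b
    · -- r^k * t
      rcases Nat.eq_zero_or_pos k with rfl | hk0
      · refine ⟨orderOf (rr C hC i j) - 1, true, by omega, ?_, ?_⟩
        · simp only [cn]
          rw [pow_zero, one_mul, t2_false]
          exact σj_eq_cn (hC := hC)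
        · simp only [clen]
          omega
      · refine ⟨k - 1, true, by omega, ?_, ?_⟩
        · have h5 := rs_pow_succ (hC := hC) (i := i) (j := j) (k - 1)
          rw [show k - 1 + 1 = k by omega] at h5
          simp only [cn]
          rw [t2_false, h5]
        · simp only [clen]
          omega
    · -- r^k * s
      refine ⟨k, true, hk, ?_, ?_⟩
      · simp only [cn]
        rw [t2_true]
      · simp only [clen]
        omega
  · cases b
    · -- r^k s * t = r^(k+1)
      rcases Nat.lt_or_ge (k+1) (orderOf (rr C hC i j)) with hk1 | hk1
      · refine ⟨k + 1, false, hk1, ?_, ?_⟩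
        · simp only [cn]
          rw [t2_false, mul_assoc]
          exact (pow_succ _ _).symm
        · simp only [clen]
          omega
      · have hkm : k + 1 = orderOf (rr C hC i j) := by omega
        refine ⟨0, false, hm, ?_, ?_⟩
        · simp only [cn]
          rw [t2_false, mul_assoc]
          have h5 : rr C hC i j ^ k * (σ C hC i * σ C hC j) = rr C hC i j ^ (k+1) :=
            (pow_succ _ _).symm
          rw [h5, hkm, pow_orderOf_eq_one, pow_zero]
        · simp only [clen]
          omega
    · -- r^k s * s = r^k
      refine ⟨k, false, hk, ?_, ?_⟩
      · simp only [cn]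
        rw [t2_true, mul_assoc, σ_mul_self, mul_one]
      · simp only [clen]
        omega

lemma enum_word (l : List Bool) :
    ∃ k typ, k < orderOf (rr C hC i j) ∧ wordP2 C hC i j l = cn C hC i j k typ := by
  have hm : 0 < orderOf (rr C hC i j) := orderOf_pos _
  induction l using List.reverseRecOn with
  | nil => exact ⟨0, false, hm, by simp only [cn]; rw [wordP2_nil, pow_zero]⟩
  | append_singleton l b ih =>
      obtain ⟨k, typ, hk, he⟩ := ih
      obtain ⟨k₁, typ₁, hk₁, he₁, _⟩ := cn_table (hC := hC) hk typ b
      exact ⟨k₁, typ₁, hk₁, by rw [wordP2_concat, he, he₁]⟩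

lemma rrpow_inj {k k' : ℕ} (hk : k < orderOf (rr C hC i j)) (hk' : k' < orderOf (rr C hC i j))
    (h : rr C hC i j ^ k = rr C hC i j ^ k') : k = k' := by
  rcases le_total k k' with hle | hle
  · have h1 : rr C hC i j ^ (k' - k) = 1 := by
      have h2 : rr C hC i j ^ (k' - k) * rr C hC i j ^ k = rr C hC i j ^ k * 1 := by
        rw [← pow_add, show k' - k + k = k' by omega, mul_one, h]
      exact mul_right_cancel h2
    have := Nat.eq_zero_of_dvd_of_lt (orderOf_dvd_of_pow_eq_one h1)
    omega
  · have h1 : rr C hC i j ^ (k - k') = 1 := by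
      have h2 : rr C hC i j ^ (k - k') * rr C hC i j ^ k' = rr C hC i j ^ k' * 1 := by
        rw [← pow_add, show k - k' + k' = k by omega, mul_one, h]
      exact mul_right_cancel h2
    have := Nat.eq_zero_of_dvd_of_lt (orderOf_dvd_of_pow_eq_one h1)
    omega

section DihedralEps
variable {ε : weylGroup C hC →* ℤˣ}
variable (hε : ∀ i, ε ⟨simpleRefl C hC i, Subgroup.subset_closure (Set.mem_range_self i)⟩ = -1)
include hε

lemma eps_rr_pow (k : ℕ) : ε (rr C hC i j ^ k) = 1 := by
  rw [map_pow, rr, map_mul, eps_σ hε, eps_σ hε]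
  simp

lemma cn_inj {k k' : ℕ} {typ typ' : Bool} (hk : k < orderOf (rr C hC i j))
    (hk' : k' < orderOf (rr C hC i j)) (h : cn C hC i j k typ = cn C hC i j k' typ') :
    k = k' ∧ typ = typ' := by
  have htyp : typ = typ' := by
    by_contra hne
    have h1 := congrArg ε h
    cases typ <;> cases typ' <;> simp at hne <;> simp only [cn] at h1
    · rw [map_mul, eps_rr_pow (hε := hε), eps_rr_pow (hε := hε), eps_σ hε] at h1
      simp at h1
    · rw [map_mul, eps_rr_pow (hε := hε), eps_rr_pow (hε := hε), eps_σ hε] at h1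
      simp at h1
  subst htyp
  refine ⟨?_, rfl⟩
  cases typ
  · simp only [cn] at h
    exact rrpow_inj (hC := hC) hk hk' h
  · simp only [cn] at h
    exact rrpow_inj (hC := hC) hk hk' (mul_right_cancel h)

lemma word_lb (l : List Bool) {k : ℕ} {typ : Bool} (hk : k < orderOf (rr C hC i j))
    (he : wordP2 C hC i j l = cn C hC i j k typ) :
    clen (orderOf (rr C hC i j)) k typ ≤ l.length := by
  induction l using List.reverseRecOn generalizing k typ with
  | nil =>
      cases typ
      · have h1 : rr C hC i j ^ k = 1 := by
          have h2 := he.symm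
          simp only [cn] at h2
          rw [wordP2_nil] at h2
          exact h2
        have := Nat.eq_zero_of_dvd_of_lt (orderOf_dvd_of_pow_eq_one h1) hk
        subst this
        simp [clen]
      · exfalso
        have h1 := congrArg ε he
        simp only [cn] at h1
        rw [wordP2_nil, map_one, map_mul, eps_rr_pow (hε := hε), eps_σ hε] at h1
        simp at h1
  | append_singleton l b ih =>
      obtain ⟨k₀, typ₀, hk₀, he₀⟩ := enum_word (hC := hC) l
      obtain ⟨k₁, typ₁, hk₁, he₁, hlen⟩ := cn_table (hC := hC) hk₀ typ₀ b
      have hwb : wordP2 C hC i j (l ++ [b]) = cn C hC i j k₁ typ₁ := by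
        rw [wordP2_concat, he₀, he₁]
      obtain ⟨hkk, htt⟩ := cn_inj (hε := hε) hk₁ hk (hwb.symm.trans he)
      subst hkk
      subst htt
      have := ih hk₀ he₀
      rw [List.length_append]
      simp only [List.length_cons, List.length_nil]
      omega

lemma len2_cn {k : ℕ} {typ : Bool} (hk : k < orderOf (rr C hC i j)) :
    len2 C hC i j (cn C hC i j k typ) = clen (orderOf (rr C hC i j)) k typ := by
  have hm : 0 < orderOf (rr C hC i j) := orderOf_pos _
  apply le_antisymm
  · -- upper bounds via explicit words
    have ha : len2 C hC i j (rr C hC i j ^ k) ≤ 2 * k := by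
      clear hk
      induction k with
      | zero =>
          rw [pow_zero]
          have h0 : len2 C hC i j (1 : weylGroup C hC) ≤ 0 :=
            len2_le (hC := hC) (wordP2_nil (C := C) (hC := hC) (i := i) (j := j)).symm
          omega
      | succ k ih =>
          have h1 : rr C hC i j ^ (k+1) = rr C hC i j ^ k * t2 C hC i j true * t2 C hC i j false := by
            rw [t2_true, t2_false, mul_assoc, ← rr, pow_succ]
          rw [h1]
          have i1 : inD C hC i j (rr C hC i j ^ k * t2 C hC i j true) :=
            inD_mul (inD_rr_pow k) inD_σi
          have := len2_mul_letter (hC := hC) i1 false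
          have := len2_mul_letter (hC := hC) (inD_rr_pow k (C := C) (hC := hC) (i := i) (j := j)) true
          omega
    have hb : ∀ n, len2 C hC i j ((σ C hC j * σ C hC i) ^ n) ≤ 2 * n := by
      intro n
      induction n with
      | zero =>
          rw [pow_zero]
          have h0 : len2 C hC i j (1 : weylGroup C hC) ≤ 0 :=
            len2_le (hC := hC) (wordP2_nil (C := C) (hC := hC) (i := i) (j := j)).symm
          omega
      | succ n ih =>
          have h1 : (σ C hC j * σ C hC i) ^ (n+1)
              = (σ C hC j * σ C hC i) ^ n * t2 C hC i j false * t2 C hC i j true := by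
            rw [t2_true, t2_false, mul_assoc, pow_succ]
          rw [h1]
          have hin : inD C hC i j ((σ C hC j * σ C hC i) ^ n) := inD_tspow n
          have i1 : inD C hC i j ((σ C hC j * σ C hC i) ^ n * t2 C hC i j false) :=
            inD_mul hin inD_σj
          have := len2_mul_letter (hC := hC) i1 true
          have := len2_mul_letter (hC := hC) hin false
          omega
    have ha' : len2 C hC i j (rr C hC i j ^ k) ≤ 2 * (orderOf (rr C hC i j) - k) := by
      rw [← tspow_eq_rrpow (hC := hC) (le_of_lt hk)]
      exact hb _
    cases typ
    · simp only [cn, clen]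
      exact le_min ha ha'
    · simp only [cn, clen]
      apply le_min
      · have := len2_mul_letter (hC := hC) (inD_rr_pow k (C := C) (hC := hC) (i := i) (j := j)) true
        rw [t2_true] at this
        omega
      · -- r^k s = (ts)^(m-k-1) * t
        have h1 : rr C hC i j ^ k * σ C hC i
            = (σ C hC j * σ C hC i) ^ (orderOf (rr C hC i j) - (k+1)) * t2 C hC i j false := by
          rw [t2_false, tspow_eq_rrpow (hC := hC) (by omega), rs_pow_succ]
        have hin : inD C hC i j ((σ C hC j * σ C hC i) ^ (orderOf (rr C hC i j) - (k+1))) :=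
          inD_tspow _
        have h2 := len2_mul_letter (hC := hC) hin false
        have h3 := hb (orderOf (rr C hC i j) - (k+1))
        rw [← h1] at h2
        omega
  · obtain ⟨l, hl, he⟩ := len2_spec (hC := hC) (inD_cn (C := C) (hC := hC) k typ)
    rw [← hl]
    exact word_lb (hε := hε) l hk he.symm

/-- THE dihedral dichotomy -/
lemma DL (hC0 : ∀ i' j', i' ≠ j' → C i' j' ≤ 0)
    (hCsym : ∀ i' j', C i' j' = 0 ↔ C j' i' = 0) (hij : i ≠ j)
    {u : weylGroup C hC} (hu : inD C hC i j u) :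
    (∃ p q : ℕ, 0 < p + q ∧
      wact C hC u (al C i) = (p:ℤ) • al C i + (q:ℤ) • al C j) ∨
    len2 C hC i j (u * σ C hC i) < len2 C hC i j u := by
  have hm : 0 < orderOf (rr C hC i j) := orderOf_pos _
  obtain ⟨geo1, geo2⟩ := dihedral_geo (hC := hC) hC0 hCsym hij
  obtain ⟨l, hl⟩ := hu
  obtain ⟨k, typ, hk, he⟩ := enum_word (hC := hC) l
  rw [hl, he]
  clear hl he l
  cases typ
  · simp only [cn]
    rcases Nat.lt_or_ge (2*k) (orderOf (rr C hC i j)) with h2k | h2k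
    · exact Or.inl (geo1 k h2k)
    · right
      have h1 : rr C hC i j ^ k * σ C hC i = cn C hC i j k true := by
        simp only [cn]
      rw [h1, len2_cn (hε := hε) hk,
        show rr C hC i j ^ k = cn C hC i j k false by simp only [cn],
        len2_cn (hε := hε) hk]
      simp only [clen]
      omega
  · simp only [cn]
    rcases Nat.lt_or_ge (2*k) (orderOf (rr C hC i j)) with h2k | h2k
    · right
      have h1 : rr C hC i j ^ k * σ C hC i * σ C hC i = cn C hC i j k false := by
        simp only [cn]
        rw [mul_assoc, σ_mul_self, mul_one]
      rw [h1, len2_cn (hε := hε) hk,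
        show rr C hC i j ^ k * σ C hC i = cn C hC i j k true by simp only [cn],
        len2_cn (hε := hε) hk]
      simp only [clen]
      omega
    · left
      obtain ⟨p, q, hpq, hgeo⟩ := geo2 k hk h2k
      refine ⟨p, q, hpq, ?_⟩
      rw [wact_mul, wact_σ_al_self (hC := hC), wact_neg, hgeo]
      module

end DihedralEps

end Dihedral


/-! ### The key positivity theorem -/

section KeyTheorem
variable [Fintype (weylGroup C hC)]
variable {ε : weylGroup C hC →* ℤˣ}
variable (hε : ∀ i, ε ⟨simpleRefl C hC i, Subgroup.subset_closure (Set.mem_range_self i)⟩ = -1)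
variable (hC0 : ∀ i' j', i' ≠ j' → C i' j' ≤ 0)
variable (hCsym : ∀ i' j', C i' j' = 0 ↔ C j' i' = 0)
include hε hC0 hCsym

lemma KT : ∀ (n : ℕ) (w : weylGroup C hC) (i : I), len C hC w = n →
    len C hC w < len C hC (w * σ C hC i) → Pos C (wact C hC w (al C i)) := by
  intro n
  induction n using Nat.strong_induction_on with
  | _ n ih =>
  intro w i hlen hlt
  rcases Nat.eq_zero_or_pos n with hn0 | hn0
  · have hw : w = 1 := by
      obtain ⟨l, hl, he⟩ := len_spec (hC := hC) w
      rw [hlen, hn0] at hl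
      rw [he, List.length_eq_zero_iff.1 hl, wordP_nil]
    subst hw
    refine ⟨?_, IsNN.al i⟩
    rw [wact_one]
    intro h
    have := congrFun h i
    rw [al_self (hC := hC)] at this
    exact two_ne_zero this
  · -- find a decreasing last letter j
    obtain ⟨l, hl, he⟩ := len_spec (hC := hC) w
    rcases List.eq_nil_or_concat l with rfl | ⟨l', j, rfl⟩
    · simp at hl; omega
    rw [List.concat_eq_append] at he
    have hwj : len C hC (w * σ C hC j) < n := by
      have h1 : w * σ C hC j = wordP C hC l' := by
        rw [he, wordP_concat, mul_assoc, σ_mul_self, mul_one]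
      have h2 := len_le h1
      have h3 : l'.length + 1 = n := by
        rw [← hlen, ← hl, List.concat_eq_append, List.length_append]
        simp
      omega
    have hij : i ≠ j := by
      intro hh
      subst hh
      omega
    -- minimize length over the coset w·⟨σi,σj⟩
    set S : Set ℕ := {d | ∃ v : weylGroup C hC, inD C hC i j (v⁻¹ * w) ∧
      len C hC v + len2 C hC i j (v⁻¹ * w) = len C hC w ∧ len C hC v = d} with hS
    have hSne : (len C hC w) ∈ S := by
      refine ⟨w, ?_, ?_, rfl⟩
      · rw [inv_mul_cancel]; exact inD_one
      · rw [inv_mul_cancel]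
        have h0 : len2 C hC i j (1 : weylGroup C hC) = 0 :=
          Nat.le_zero.1 (len2_le (hC := hC) (wordP2_nil (C := C) (hC := hC) (i := i) (j := j)).symm)
        rw [h0]
        omega
    obtain ⟨v, hvin, hvsum, hvd⟩ := Nat.sInf_mem (⟨len C hC w, hSne⟩ : S.Nonempty)
    have hgen : ∀ v' : weylGroup C hC, inD C hC i j (v'⁻¹ * w) →
        len C hC w ≤ len C hC v' + len2 C hC i j (v'⁻¹ * w) := by
      intro v' h
      have h1 : len C hC w ≤ len C hC v' + len C hC (v'⁻¹ * w) := by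
        have := len_mul_le (hC := hC) v' (v'⁻¹ * w)
        rw [mul_inv_cancel_left] at this
        exact this
      have h2 := len_le_len2 (hC := hC) h
      omega
    have ht2inv : ∀ b : Bool, (t2 C hC i j b)⁻¹ = t2 C hC i j b := by
      intro b
      cases b
      · rw [t2_false, σ_inv]
      · rw [t2_true, σ_inv]
    have ht2ne : ∀ b : Bool, len C hC (v * t2 C hC i j b) ≠ len C hC v := by
      intro b
      cases b
      · rw [t2_false]; exact len_σ_ne hε v j
      · rw [t2_true]; exact len_σ_ne hε v i
    have hvmin : ∀ b : Bool, len C hC v < len C hC (v * t2 C hC i j b) := by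
      intro b
      rcases lt_or_gt_of_ne (ht2ne b) with hless | hmore
      · exfalso
        set v' := v * t2 C hC i j b with hv'
        have hv'w : v'⁻¹ * w = t2 C hC i j b * (v⁻¹ * w) := by
          rw [hv', mul_inv_rev, ht2inv, mul_assoc]
        have hin' : inD C hC i j (v'⁻¹ * w) := by
          rw [hv'w]
          cases b
          · exact inD_mul inD_σj hvin
          · exact inD_mul inD_σi hvin
        have hlen2' : len2 C hC i j (v'⁻¹ * w) ≤ len2 C hC i j (v⁻¹ * w) + 1 := by
          rw [hv'w]
          exact len2_letter_mul (hC := hC) hvin b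
        have hsum' : len C hC v' + len2 C hC i j (v'⁻¹ * w) = len C hC w := by
          have hge := hgen v' hin'
          omega
        have hmem : len C hC v' ∈ S := ⟨v', hin', hsum', rfl⟩
        have := Nat.sInf_le hmem
        omega
      · exact hmore
    have hvltw : len C hC v < len C hC w := by
      have hle : len C hC v ≤ len C hC w := by omega
      rcases lt_or_eq_of_le hle with h | h
      · exact h
      · exfalso
        have hz : len2 C hC i j (v⁻¹ * w) = 0 := by omega
        have hvw : v = w := by
          have h1 := len2_eq_zero (hC := hC) hvin hz
          have h2 : v * (v⁻¹ * w) = v * 1 := by rw [h1]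
          rw [mul_inv_cancel_left, mul_one] at h2
          exact h2.symm
        have := hvmin false
        rw [t2_false, hvw] at this
        omega
    have hvi : Pos C (wact C hC v (al C i)) := by
      apply ih (len C hC v) (by omega) v i rfl
      have := hvmin true
      rw [t2_true] at this
      exact this
    have hvj : Pos C (wact C hC v (al C j)) := by
      apply ih (len C hC v) (by omega) v j rfl
      have := hvmin false
      rw [t2_false] at this
      exact this
    rcases DL (hε := hε) hC0 hCsym hij hvin with ⟨p, q, hpq, hcombo⟩ | hdec
    · have hw' : w = v * (v⁻¹ * w) := (mul_inv_cancel_left v w).symm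
      have : wact C hC w (al C i)
          = (p:ℤ) • wact C hC v (al C i) + (q:ℤ) • wact C hC v (al C j) := by
        conv_lhs => rw [hw']
        rw [wact_mul, hcombo, wact_comb]
      rw [this]
      exact Pos.comb (hC := hC) hvi hvj p q (by omega)
    · exfalso
      have h1 : w * σ C hC i = v * ((v⁻¹ * w) * σ C hC i) := by
        rw [← mul_assoc, mul_inv_cancel_left]
      have h2 : len C hC (w * σ C hC i) ≤ len C hC v + len2 C hC i j ((v⁻¹ * w) * σ C hC i) := by
        rw [h1]
        have h3 := len_mul_le (hC := hC) v ((v⁻¹ * w) * σ C hC i)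
        have h4 := len_le_len2 (hC := hC) (inD_mul hvin inD_σi)
        omega
      omega

lemma neg_root (w : weylGroup C hC) (i : I) (h : len C hC (w * σ C hC i) < len C hC w) :
    Pos C (-(wact C hC w (al C i))) := by
  set v := w * σ C hC i with hv
  have h1 : v * σ C hC i = w := by rw [hv, mul_assoc, σ_mul_self, mul_one]
  have h2 : len C hC v < len C hC (v * σ C hC i) := by rw [h1]; exact h
  have h3 := KT (hε := hε) hC0 hCsym (len C hC v) v i rfl h2
  have h4 : wact C hC w (al C i) = -(wact C hC v (al C i)) := by
    have h5 : w = v * σ C hC i := h1.symm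
    rw [h5, wact_mul, wact_σ_al_self (hC := hC), wact_neg]
  rw [h4, neg_neg]
  exact h3

/-- `μ - wμ` is a nonnegative combination of simple roots, for dominant `μ` -/
lemma F3 : ∀ (n : ℕ) (w : weylGroup C hC) (μ : I → ℤ), len C hC w = n → dom μ →
    IsNN C (μ - wact C hC w μ) := by
  intro n
  induction n using Nat.strong_induction_on with
  | _ n ih =>
  intro w μ hlen hdom
  rcases Nat.eq_zero_or_pos n with hn0 | hn0
  · have hw : w = 1 := by
      obtain ⟨l, hl, he⟩ := len_spec (hC := hC) w
      rw [hlen, hn0] at hl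
      rw [he, List.length_eq_zero_iff.1 hl, wordP_nil]
    subst hw
    rw [wact_one, sub_self]
    exact IsNN.zero
  · obtain ⟨l, hl, he⟩ := len_spec (hC := hC) w
    rcases List.eq_nil_or_concat l with rfl | ⟨l', j, rfl⟩
    · simp at hl; omega
    rw [List.concat_eq_append] at he
    have hwj : len C hC (w * σ C hC j) < n := by
      have h1 : w * σ C hC j = wordP C hC l' := by
        rw [he, wordP_concat, mul_assoc, σ_mul_self, mul_one]
      have h2 := len_le h1
      have h3 : l'.length + 1 = n := by
        rw [← hlen, ← hl, List.concat_eq_append, List.length_append]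
        simp
      omega
    have hneg : Pos C (-(wact C hC w (al C j))) := by
      apply neg_root (hε := hε) hC0 hCsym
      omega
    have hIH := ih (len C hC (w * σ C hC j)) (by omega) (w * σ C hC j) μ rfl hdom
    have hsplit : μ - wact C hC w μ
        = (μ - wact C hC (w * σ C hC j) μ) + ((μ j).toNat : ℤ) • (-(wact C hC w (al C j))) := by
      have h1 : wact C hC (w * σ C hC j) μ
          = wact C hC w μ - (μ j) • wact C hC w (al C j) := by
        rw [wact_mul, wact_σ, wact_sub, wact_smul]
      have h2 : ((μ j).toNat : ℤ) = μ j := Int.toNat_of_nonneg (hdom j)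
      rw [h1, h2]
      module
    rw [hsplit]
    exact hIH.add (hneg.2.nsmul _)

/-- uniqueness of the dominant representative -/
lemma dom_unique (w : weylGroup C hC) (μ : I → ℤ) (h1 : dom μ) (h2 : dom (wact C hC w μ)) :
    wact C hC w μ = μ := by
  have hz1 := F3 (hε := hε) hC0 hCsym (len C hC w) w μ rfl h1
  have hz2 := F3 (hε := hε) hC0 hCsym (len C hC w⁻¹) w⁻¹ (wact C hC w μ) rfl h2
  have hinv : wact C hC w⁻¹ (wact C hC w μ) = μ := wact_inv w μ _ rfl
  rw [hinv] at hz2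
  by_contra hne
  have hzne : μ - wact C hC w μ ≠ 0 := fun h => hne (by
    have := sub_eq_zero.1 h
    exact this.symm)
  have hp1 : Pos C (μ - wact C hC w μ) := ⟨hzne, hz1⟩
  have hp2 : Pos C (-(μ - wact C hC w μ)) := by
    refine ⟨neg_ne_zero.2 hzne, ?_⟩
    have : -(μ - wact C hC w μ) = wact C hC w μ - μ := by ring
    rw [this]
    exact hz2
  exact Pos.not_neg (hC := hC) hp1 hp2

/-- the dominance comparison (M2) -/
lemma M2 (y μ : I → ℤ) (hy : sdom y) (hμ : dom μ) (w : weylGroup C hC) :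
    BB C hC (wact C hC w μ) y ≤ BB C hC μ y ∧
      (BB C hC (wact C hC w μ) y = BB C hC μ y → wact C hC w μ = μ) := by
  obtain ⟨w0, _, hmax⟩ := Finset.exists_max_image Finset.univ
    (fun w' : weylGroup C hC => BB C hC (wact C hC w' μ) y) ⟨1, Finset.mem_univ 1⟩
  have hdom0 : ∀ w' : weylGroup C hC,
      BB C hC (wact C hC w' μ) y = BB C hC (wact C hC w0 μ) y → dom (wact C hC w' μ) := by
    intro w' hmax' i
    have h1 : BB C hC (wact C hC (σ C hC i * w') μ) y ≤ BB C hC (wact C hC w' μ) y := by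
      rw [hmax']
      exact hmax _ (Finset.mem_univ _)
    rw [wact_mul, wact_σ, BB_sub_left, BB_smul_left] at h1
    have h2 : 0 < BB C hC (al C i) y := by
      have h3 := BB_al (C := C) (hC := hC) i y
      have h4 := bal_pos (C := C) (hC := hC) i
      have h5 := hy i
      nlinarith
    nlinarith
  have hw0dom : dom (wact C hC w0 μ) := hdom0 w0 rfl
  have hw0eq : wact C hC w0 μ = μ :=
    dom_unique (hε := hε) hC0 hCsym w0 μ hμ hw0dom
  constructor
  · have := hmax w (Finset.mem_univ w)
    rw [hw0eq] at this
    exact this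
  · intro heq
    have hd : dom (wact C hC w μ) := by
      apply hdom0
      rw [hw0eq, heq]
    exact dom_unique (hε := hε) hC0 hCsym w μ hμ hd

/-- stabilizer of a strictly dominant vector is trivial -/
lemma stab_sd (μ : I → ℤ) (hμ : sdom μ) (w : weylGroup C hC) (h : wact C hC w μ = μ) :
    w = 1 := by
  have hbasis : ∀ k : I, wact C hC w (fun k' => if k = k' then 1 else 0)
      = (fun k' => if k = k' then 1 else 0) := by
    intro k
    set e : I → ℤ := fun k' => if k = k' then 1 else 0 with hedef
    have hedom : dom e := by
      intro k'
      by_cases hkk : k = k' <;> simp [hedef, hkk]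
    have hM := M2 (hε := hε) hC0 hCsym μ e hμ hedom w
    apply hM.2
    have hinv : wact C hC w⁻¹ μ = μ := wact_inv w μ μ h
    calc BB C hC (wact C hC w e) μ = BB C hC (wact C hC w e) (wact C hC w μ) := by rw [h]
      _ = BB C hC e μ := BB_wact w e μ
  apply weyl_ext
  intro x
  have hx : x = ∑ k, x k • (fun k' => if k = k' then (1:ℤ) else 0) := by
    funext k'
    rw [Finset.sum_apply]
    rw [Finset.sum_eq_single k']
    · simp
    · intro b _ hb
      simp [hb]
    · intro hk'
      exact absurd (Finset.mem_univ k') hk'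
  rw [wact_one]
  conv_lhs => rw [hx]
  rw [wact_sum]
  conv_rhs => rw [hx]
  apply Finset.sum_congr rfl
  intro k _
  rw [wact_smul, hbasis k]

end KeyTheorem



/-! ### The algebra part -/

section Algebra
variable [Fintype (weylGroup C hC)]
variable {ε : weylGroup C hC →* ℤˣ}
variable (hε : ∀ i, ε ⟨simpleRefl C hC i, Subgroup.subset_closure (Set.mem_range_self i)⟩ = -1)
variable (hC0 : ∀ i' j', i' ≠ j' → C i' j' ≤ 0)
variable (hCsym : ∀ i' j', C i' j' = 0 ↔ C j' i' = 0)

variable (C hC) in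
/-- translation of the group action to the group algebra -/
noncomputable def T (w : weylGroup C hC) (f : AddMonoidAlgebra ℤ (I → ℤ)) :
    AddMonoidAlgebra ℤ (I → ℤ) :=
  AddMonoidAlgebra.mapDomain ((w : AddAut (I → ℤ)) : (I → ℤ) → (I → ℤ)) f

lemma T_eq (w : weylGroup C hC) (f : AddMonoidAlgebra ℤ (I → ℤ)) :
    T C hC w f = AddMonoidAlgebra.mapDomain (wact C hC w) f := rfl

lemma T_single (w : weylGroup C hC) (x : I → ℤ) (c : ℤ) :
    T C hC w (AddMonoidAlgebra.single x c) = AddMonoidAlgebra.single (wact C hC w x) c :=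
  AddMonoidAlgebra.mapDomain_single

lemma T_mul (w : weylGroup C hC) (f g : AddMonoidAlgebra ℤ (I → ℤ)) :
    T C hC w (f * g) = T C hC w f * T C hC w g :=
  AddMonoidAlgebra.mapDomain_mul ((w : AddAut (I → ℤ)) : (I → ℤ) ≃+ (I → ℤ)) f g

lemma T_smul (w : weylGroup C hC) (c : ℤ) (f : AddMonoidAlgebra ℤ (I → ℤ)) :
    T C hC w (c • f) = c • T C hC w f :=
  AddMonoidAlgebra.coeff_injective (Finsupp.mapDomain_smul c f.coeff)

lemma T_sum {κ : Type*} (w : weylGroup C hC) (s : Finset κ)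
    (f : κ → AddMonoidAlgebra ℤ (I → ℤ)) :
    T C hC w (∑ k ∈ s, f k) = ∑ k ∈ s, T C hC w (f k) :=
  AddMonoidAlgebra.coeff_injective (by
    show Finsupp.mapDomain _ (∑ k ∈ s, f k).coeff = (∑ k ∈ s, T C hC w (f k)).coeff
    rw [AddMonoidAlgebra.coeff_sum, AddMonoidAlgebra.coeff_sum]
    exact map_sum (Finsupp.mapDomain.addMonoidHom _) (fun k => (f k).coeff) s)

lemma T_sub (w : weylGroup C hC) (f g : AddMonoidAlgebra ℤ (I → ℤ)) :
    T C hC w (f - g) = T C hC w f - T C hC w g :=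
  AddMonoidAlgebra.coeff_injective (map_sub (Finsupp.mapDomain.addMonoidHom _) f.coeff g.coeff)

lemma T_apply (w : weylGroup C hC) (f : AddMonoidAlgebra ℤ (I → ℤ)) (x : I → ℤ) :
    (T C hC w f).coeff (wact C hC w x) = f.coeff x :=
  Finsupp.mapDomain_apply (wact_injective w) f.coeff x

lemma eps_sq (u : weylGroup C hC) : (ε u : ℤ) * (ε u : ℤ) = 1 := by
  rcases Int.units_eq_one_or (ε u) with h | h <;> rw [h] <;> norm_num

lemma A_antisym (u : weylGroup C hC) (lam : I → ℤ) :
    T C hC u (weylNumerator C hC ε lam) = (ε u : ℤ) • weylNumerator C hC ε lam := by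
  rw [weylNumerator, T_sum, Finset.smul_sum]
  apply Fintype.sum_equiv (Equiv.mulLeft u)
  intro w
  rw [T_smul, T_single]
  show (ε w : ℤ) • AddMonoidAlgebra.single (wact C hC u (wact C hC w lam)) 1
    = (ε u : ℤ) • (ε (u * w) : ℤ) • AddMonoidAlgebra.single (wact C hC (u * w) lam) 1
  rw [← wact_mul, smul_smul, map_mul]
  push_cast
  rw [show (ε u : ℤ) * ((ε u : ℤ) * (ε w : ℤ)) = ((ε u : ℤ) * (ε u : ℤ)) * (ε w : ℤ) by ring,
    eps_sq (ε := ε), one_mul]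

lemma A_coeff (lam μ : I → ℤ) :
    (weylNumerator C hC ε lam).coeff μ = ∑ w : weylGroup C hC,
      if wact C hC w lam = μ then (ε w : ℤ) else 0 := by
  rw [weylNumerator]
  rw [AddMonoidAlgebra.coeff_sum, Finsupp.finset_sum_apply]
  apply Finset.sum_congr rfl
  intro w _
  rw [AddMonoidAlgebra.coeff_smul, Finsupp.smul_apply, AddMonoidAlgebra.coeff_single, Finsupp.single_apply]
  by_cases h : (w : AddAut (I → ℤ)) lam = μ
  · rw [if_pos h, if_pos (show wact C hC w lam = μ from h), smul_eq_mul, mul_one]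
  · rw [if_neg h, if_neg (show ¬ wact C hC w lam = μ from h), smul_zero]

include hε hC0 hCsym in
lemma sd_orbit_inj (lam : I → ℤ) (hlam : sdom lam) {u w : weylGroup C hC}
    (h : wact C hC w lam = wact C hC u lam) : w = u := by
  have h1 : wact C hC (u⁻¹ * w) lam = lam := by
    rw [wact_mul, h]
    exact wact_inv u lam _ rfl
  have h2 := stab_sd (hε := hε) hC0 hCsym lam hlam (u⁻¹ * w) h1
  have h3 : u * (u⁻¹ * w) = u * 1 := by rw [h2]
  rw [mul_inv_cancel_left, mul_one] at h3
  exact h3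

include hε hC0 hCsym in
lemma A_coeff_orbit (lam : I → ℤ) (hlam : sdom lam) (u : weylGroup C hC) :
    (weylNumerator C hC ε lam).coeff (wact C hC u lam) = (ε u : ℤ) := by
  rw [A_coeff]
  rw [Finset.sum_eq_single u]
  · rw [if_pos rfl]
  · intro w _ hw
    rw [if_neg]
    intro hcon
    exact hw (sd_orbit_inj (hε := hε) hC0 hCsym lam hlam hcon)
  · intro hu
    exact absurd (Finset.mem_univ u) hu

lemma A_coeff_zero (lam μ : I → ℤ) (h : ∀ w : weylGroup C hC, wact C hC w lam ≠ μ) :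
    (weylNumerator C hC ε lam).coeff μ = 0 := by
  rw [A_coeff]
  apply Finset.sum_eq_zero
  intro w _
  rw [if_neg (h w)]

variable (C hC) in
/-- orbit of a vector as a finset -/
noncomputable def Ω (lam : I → ℤ) : Finset (I → ℤ) :=
  Finset.image (fun w : weylGroup C hC => wact C hC w lam) Finset.univ

lemma mem_Ω {lam μ : I → ℤ} : μ ∈ Ω C hC lam ↔ ∃ w : weylGroup C hC, wact C hC w lam = μ := by
  rw [Ω, Finset.mem_image]
  constructor
  · rintro ⟨w, _, h⟩; exact ⟨w, h⟩
  · rintro ⟨w, h⟩; exact ⟨w, Finset.mem_univ w, h⟩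

lemma self_mem_Ω (lam : I → ℤ) : lam ∈ Ω C hC lam :=
  mem_Ω.2 ⟨1, rfl⟩

variable (C hC) in
/-- orbit sum -/
noncomputable def SS (lam : I → ℤ) : AddMonoidAlgebra ℤ (I → ℤ) :=
  ∑ μ ∈ Ω C hC lam, AddMonoidAlgebra.single μ (1:ℤ)

lemma Ω_stable (u : weylGroup C hC) (lam : I → ℤ) :
    (Ω C hC lam).image (wact C hC u) = Ω C hC lam := by
  ext μ
  rw [Finset.mem_image]
  constructor
  · rintro ⟨ν, hν, rfl⟩
    obtain ⟨w, rfl⟩ := mem_Ω.1 hν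
    exact mem_Ω.2 ⟨u * w, by rw [wact_mul]⟩
  · intro hμ
    obtain ⟨w, rfl⟩ := mem_Ω.1 hμ
    refine ⟨wact C hC (u⁻¹ * w) lam, mem_Ω.2 ⟨u⁻¹ * w, rfl⟩, ?_⟩
    rw [← wact_mul, mul_inv_cancel_left]

lemma SS_invariant (u : weylGroup C hC) (lam : I → ℤ) :
    T C hC u (SS C hC lam) = SS C hC lam := by
  rw [SS, T_sum]
  have h1 : ∀ μ ∈ Ω C hC lam, T C hC u (AddMonoidAlgebra.single μ (1:ℤ))
      = AddMonoidAlgebra.single (wact C hC u μ) (1:ℤ) := fun μ _ => T_single u μ 1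
  have h2 : ∑ μ ∈ Ω C hC lam, AddMonoidAlgebra.single (wact C hC u μ) (1:ℤ)
      = ∑ μ ∈ (Ω C hC lam).image (wact C hC u), AddMonoidAlgebra.single μ (1:ℤ) := by
    symm
    apply Finset.sum_image
    intro x _ y _ h
    exact wact_injective u h
  rw [Finset.sum_congr rfl h1, h2, Ω_stable]

lemma SS_apply (lam μ : I → ℤ) :
    (SS C hC lam).coeff μ = if μ ∈ Ω C hC lam then (1:ℤ) else 0 := by
  rw [SS, AddMonoidAlgebra.coeff_sum, Finsupp.finset_sum_apply]; simp only [AddMonoidAlgebra.coeff_single]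
  rw [Finset.sum_congr rfl (fun ν _ => Finsupp.single_apply (a := ν) (b := (1:ℤ)) (a' := μ))]
  exact Finset.sum_ite_eq' (Ω C hC lam) μ (fun _ => (1:ℤ))

/-- expansion of the product -/
lemma prod_expand (ν : I → ℤ) :
    weylNumerator C hC ε rho * SS C hC ν
      = ∑ w : weylGroup C hC, ∑ μ ∈ Ω C hC ν,
          (ε w : ℤ) • AddMonoidAlgebra.single (wact C hC w rho + μ) (1:ℤ) := by
  rw [weylNumerator, SS, Finset.sum_mul]
  apply Finset.sum_congr rfl
  intro w _
  rw [Finset.mul_sum]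
  apply Finset.sum_congr rfl
  intro μ _
  rw [smul_mul_assoc, AddMonoidAlgebra.single_mul_single, mul_one]
  rfl

lemma prod_coeff (ν ν' : I → ℤ) :
    (weylNumerator C hC ε rho * SS C hC ν).coeff ν'
      = ∑ w : weylGroup C hC, ∑ μ ∈ Ω C hC ν,
          (if wact C hC w rho + μ = ν' then (ε w : ℤ) else 0) := by
  rw [prod_expand, AddMonoidAlgebra.coeff_sum, Finsupp.finset_sum_apply]
  apply Finset.sum_congr rfl
  intro w _
  rw [AddMonoidAlgebra.coeff_sum, Finsupp.finset_sum_apply]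
  apply Finset.sum_congr rfl
  intro μ _
  rw [AddMonoidAlgebra.coeff_smul, Finsupp.smul_apply, AddMonoidAlgebra.coeff_single, Finsupp.single_apply]
  by_cases h : wact C hC w rho + μ = ν' <;> simp [h]

lemma prod_supp (ν ν' : I → ℤ) (h : (weylNumerator C hC ε rho * SS C hC ν).coeff ν' ≠ 0) :
    ∃ (w w' : weylGroup C hC), ν' = wact C hC w rho + wact C hC w' ν := by
  by_contra hcon
  push_neg at hcon
  apply h
  rw [prod_coeff]
  apply Finset.sum_eq_zero
  intro w _
  apply Finset.sum_eq_zero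
  intro μ hμ
  obtain ⟨w', rfl⟩ := mem_Ω.1 hμ
  rw [if_neg]
  intro hcc
  exact hcon w w' hcc.symm

include hε hC0 hCsym in
lemma leadB (ν : I → ℤ) (hν : dom ν) (w w' : weylGroup C hC)
    (h : wact C hC w rho + wact C hC w' ν = rho + ν) :
    wact C hC w rho = rho ∧ wact C hC w' ν = ν := by
  have hsd : sdom ((rho : I → ℤ) + ν) := by
    intro k
    have := hν k
    show 1 ≤ 1 + ν k
    omega
  have hdr : dom (rho : I → ℤ) := fun k => by norm_num [rho]
  have h1 := M2 (hε := hε) hC0 hCsym ((rho : I → ℤ) + ν) rho hsd hdr w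
  have h2 := M2 (hε := hε) hC0 hCsym ((rho : I → ℤ) + ν) ν hsd hν w'
  have h3 : BB C hC (wact C hC w rho) ((rho : I → ℤ) + ν)
      + BB C hC (wact C hC w' ν) ((rho : I → ℤ) + ν)
      = BB C hC (rho : I → ℤ) ((rho : I → ℤ) + ν) + BB C hC ν ((rho : I → ℤ) + ν) := by
    rw [← BB_add_left, ← BB_add_left, h]
  constructor
  · exact h1.2 (by linarith [h1.1, h2.1])
  · exact h2.2 (by linarith [h1.1, h2.1])

include hε hC0 hCsym in
lemma normA (ν : I → ℤ) (hν : dom ν) (w w' : weylGroup C hC) (lam : I → ℤ)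
    (hlam : lam = wact C hC w rho + wact C hC w' ν) (hsd : sdom lam)
    (hne : lam ≠ (rho : I → ℤ) + ν) :
    BB C hC lam lam < BB C hC ((rho : I → ℤ) + ν) ((rho : I → ℤ) + ν) := by
  have hdr : dom (rho : I → ℤ) := fun k => by norm_num [rho]
  have h1 := (M2 (hε := hε) hC0 hCsym lam rho hsd hdr w).1
  have h2 := (M2 (hε := hε) hC0 hCsym lam ν hsd hν w').1
  have hL : BB C hC lam lam ≤ BB C hC ((rho : I → ℤ) + ν) lam := by
    nth_rewrite 1 [hlam]
    rw [BB_add_left, BB_add_left]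
    linarith
  have h3 : 0 < BB C hC ((rho : I → ℤ) + ν - lam) ((rho : I → ℤ) + ν - lam) :=
    BB_pos _ (sub_ne_zero.2 (Ne.symm hne))
  rw [BB_sub_left, BB_sub_right, BB_sub_right] at h3
  have hsymm := BB_symm (C := C) (hC := hC) ((rho : I → ℤ) + ν) lam
  linarith


lemma antisym_rel (f : AddMonoidAlgebra ℤ (I → ℤ)) (hf : ∀ u, T C hC u f = (ε u : ℤ) • f)
    (u : weylGroup C hC) (μ : I → ℤ) :
    f.coeff (wact C hC u μ) = (ε u : ℤ) * f.coeff μ := by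
  have h1 : (T C hC u f).coeff (wact C hC u μ) = f.coeff μ := T_apply u f μ
  rw [hf u, AddMonoidAlgebra.coeff_smul, Finsupp.smul_apply, smul_eq_mul] at h1
  linear_combination (ε u : ℤ) * h1 - f.coeff (wact C hC u μ) * eps_sq (ε := ε) u

include hε hC0 hCsym in
lemma antisym_decomp : ∀ (N : ℕ) (f : AddMonoidAlgebra ℤ (I → ℤ)), f.coeff.support.card = N →
    (∀ u, T C hC u f = (ε u : ℤ) • f) →
    ∃ (s : Finset (I → ℤ)) (c : (I → ℤ) → ℤ),
      (∀ lam ∈ s, lam ∈ f.coeff.support ∧ sdom lam) ∧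
      f = ∑ lam ∈ s, c lam • weylNumerator C hC ε lam := by
  intro N
  induction N using Nat.strong_induction_on with
  | _ N ih =>
  intro f hcard hf
  rcases Nat.eq_zero_or_pos N with hN0 | hN0
  · have hfz : f = 0 := by
      rw [← AddMonoidAlgebra.coeff_eq_zero, ← Finsupp.support_eq_empty, ← Finset.card_eq_zero, hcard, hN0]
    exact ⟨∅, fun _ => 0, by simp, by rw [hfz, Finset.sum_empty]⟩
  · have hne : f.coeff.support.Nonempty := by rw [← Finset.card_pos, hcard]; exact hN0
    obtain ⟨lam0, hlam0⟩ := hne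
    obtain ⟨u, hu⟩ := exists_dom_rep (hC := hC) lam0
    set lam := wact C hC u lam0 with hlamdef
    have hflam : f.coeff lam ≠ 0 := by
      rw [hlamdef, antisym_rel f hf u lam0]
      exact mul_ne_zero (Units.ne_zero (ε u)) (Finsupp.mem_support_iff.1 hlam0)
    have hsd : sdom lam := by
      intro k
      by_contra hk
      have hk0 : lam k = 0 := by have := hu k; omega
      have hfix : wact C hC (σ C hC k) lam = lam := by
        rw [wact_σ, hk0]
        simp
      have h1 : f.coeff lam = -(f.coeff lam) := by
        conv_lhs => rw [← hfix]
        rw [antisym_rel f hf (σ C hC k) lam, eps_σ hε k]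
        push_cast
        ring
      omega
    set c0 := f.coeff lam with hc0
    set f' := f - c0 • weylNumerator C hC ε lam with hf'def
    have hf'anti : ∀ u', T C hC u' f' = (ε u' : ℤ) • f' := by
      intro u'
      rw [hf'def, T_sub, T_smul, hf u', A_antisym (ε := ε) u' lam, smul_sub, smul_comm]
    have hof : ∀ u', f'.coeff (wact C hC u' lam) = 0 := by
      intro u'
      rw [hf'def, AddMonoidAlgebra.coeff_sub, Finsupp.sub_apply, AddMonoidAlgebra.coeff_smul, Finsupp.smul_apply,
        A_coeff_orbit (hε := hε) hC0 hCsym lam hsd u', antisym_rel f hf u' lam, smul_eq_mul]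
      ring
    have hsub : f'.coeff.support ⊆ f.coeff.support.erase lam := by
      intro μ hμ
      have hμ0 : f'.coeff μ ≠ 0 := Finsupp.mem_support_iff.1 hμ
      rw [Finset.mem_erase]
      constructor
      · intro heq
        apply hμ0
        rw [heq]
        have := hof 1
        rwa [wact_one] at this
      · by_cases horb : ∃ u', wact C hC u' lam = μ
        · obtain ⟨u', rfl⟩ := horb
          exact absurd (hof u') hμ0
        · push_neg at horb
          have hA := A_coeff_zero (ε := ε) lam μ horb
          rw [hf'def, AddMonoidAlgebra.coeff_sub, Finsupp.sub_apply, AddMonoidAlgebra.coeff_smul, Finsupp.smul_apply, hA, smul_zero, sub_zero] at hμ0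
          exact Finsupp.mem_support_iff.2 hμ0
    have hmemf : lam ∈ f.coeff.support := Finsupp.mem_support_iff.2 hflam
    have hcard' : f'.coeff.support.card < N := by
      calc f'.coeff.support.card ≤ (f.coeff.support.erase lam).card := Finset.card_le_card hsub
        _ < f.coeff.support.card := Finset.card_erase_lt_of_mem hmemf
        _ = N := hcard
    obtain ⟨s', c', hs'props, hs'eq⟩ := ih _ hcard' f' rfl hf'anti
    have hlamnot : lam ∉ s' := by
      intro h
      exact (Finset.mem_erase.1 (hsub (hs'props lam h).1)).1 rfl
    refine ⟨insert lam s', Function.update c' lam c0, ?_, ?_⟩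
    · intro μ hμ
      rcases Finset.mem_insert.1 hμ with rfl | hμ'
      · exact ⟨hmemf, hsd⟩
      · obtain ⟨h1, h2⟩ := hs'props μ hμ'
        exact ⟨Finset.mem_of_mem_erase (hsub h1), h2⟩
    · rw [Finset.sum_insert hlamnot, Function.update_self]
      have hcong : ∑ μ ∈ s', (Function.update c' lam c0 μ) • weylNumerator C hC ε μ
          = ∑ μ ∈ s', c' μ • weylNumerator C hC ε μ := by
        apply Finset.sum_congr rfl
        intro μ hμ
        have hne : μ ≠ lam := fun h => hlamnot (by rw [← h]; exact hμ)
        rw [Function.update_of_ne hne c0 c']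
      rw [hcong, ← hs'eq, hf'def]
      abel

include hε hC0 hCsym in
lemma main_induction : ∀ (N : ℕ) (μ : I → ℤ), sdom μ → (BB C hC μ μ).toNat = N →
    ∃ q : AddMonoidAlgebra ℤ (I → ℤ),
      weylNumerator C hC ε rho * q = weylNumerator C hC ε μ ∧ ∀ u, T C hC u q = q := by
  intro N
  induction N using Nat.strong_induction_on with
  | _ N ih =>
  intro μ hμ hN
  set ν := μ - rho with hν
  have hνdom : dom ν := by
    intro k
    have := hμ k
    show 0 ≤ μ k - rho k
    show 0 ≤ μ k - 1
    omega
  have hμν : (rho : I → ℤ) + ν = μ := by rw [hν]; ring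
  set P0 := weylNumerator C hC ε rho * SS C hC ν with hP0
  have hanti : ∀ u, T C hC u P0 = (ε u : ℤ) • P0 := by
    intro u
    rw [hP0, T_mul, A_antisym (ε := ε), SS_invariant, smul_mul_assoc]
  obtain ⟨s, c, hsprops, hseq⟩ := antisym_decomp (hε := hε) hC0 hCsym _ P0 rfl hanti
  have hP0μ : P0.coeff μ = 1 := by
    rw [hP0, prod_coeff]
    rw [Finset.sum_eq_single 1]
    · rw [Finset.sum_eq_single ν]
      · rw [if_pos (by rw [wact_one, hμν]), map_one]
        rfl
      · intro μ' _ hμ'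
        rw [if_neg]
        intro hcc
        rw [wact_one] at hcc
        apply hμ'
        have := hμν
        have h2 : (rho : I → ℤ) + μ' = (rho : I → ℤ) + ν := by rw [hcc, hμν]
        exact add_left_cancel h2
      · intro hν'
        exact absurd (self_mem_Ω (hC := hC) ν) hν'
    · intro w _ hw
      apply Finset.sum_eq_zero
      intro μ' hμ'
      obtain ⟨w', rfl⟩ := mem_Ω.1 hμ'
      rw [if_neg]
      intro hcc
      have hl := (leadB (hε := hε) hC0 hCsym ν hνdom w w' (by rw [hcc, ← hμν])).1
      exact hw (stab_sd (hε := hε) hC0 hCsym rho sdom_rho w hl)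
    · intro h1
      exact absurd (Finset.mem_univ 1) h1
  have hAzero : ∀ lam ∈ s, lam ≠ μ → (weylNumerator C hC ε lam).coeff μ = 0 := by
    intro lam hlam hne
    apply A_coeff_zero
    intro w hw
    have hsdlam := (hsprops lam hlam).2
    have hdu := dom_unique (hε := hε) hC0 hCsym w lam hsdlam.dom (by rw [hw]; exact hμ.dom)
    exact hne (by rw [← hdu, hw])
  have heval : P0.coeff μ = ∑ lam ∈ s, c lam * (weylNumerator C hC ε lam).coeff μ := by
    rw [hseq, AddMonoidAlgebra.coeff_sum, Finsupp.finset_sum_apply]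
    apply Finset.sum_congr rfl
    intro lam _
    rw [AddMonoidAlgebra.coeff_smul, Finsupp.smul_apply, smul_eq_mul]
  have hAμμ : (weylNumerator C hC ε μ).coeff μ = 1 := by
    have h1 := A_coeff_orbit (hε := hε) hC0 hCsym μ hμ 1
    rw [wact_one, map_one] at h1
    exact h1
  have hμs : μ ∈ s := by
    by_contra hμs
    have hz : P0.coeff μ = 0 := by
      rw [heval]
      apply Finset.sum_eq_zero
      intro lam hlam
      rw [hAzero lam hlam (fun h => hμs (h ▸ hlam)), mul_zero]
    have h10 : (1:ℤ) = 0 := by rw [← hP0μ]; exact hz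
    norm_num at h10
  have herase : ∑ lam ∈ s.erase μ, c lam * (weylNumerator C hC ε lam).coeff μ = 0 := by
    apply Finset.sum_eq_zero
    intro lam hlam
    rw [hAzero lam (Finset.mem_of_mem_erase hlam) (Finset.mem_erase.1 hlam).1, mul_zero]
  have hcμ : c μ = 1 := by
    have h3 : P0.coeff μ = c μ * (weylNumerator C hC ε μ).coeff μ
        + ∑ lam ∈ s.erase μ, c lam * (weylNumerator C hC ε lam).coeff μ := by
      rw [heval, ← Finset.add_sum_erase s _ hμs]
    rw [hP0μ, hAμμ, herase] at h3
    linarith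
  have hrec : ∀ lam ∈ s.erase μ, ∃ q : AddMonoidAlgebra ℤ (I → ℤ),
      weylNumerator C hC ε rho * q = weylNumerator C hC ε lam ∧ ∀ u, T C hC u q = q := by
    intro lam hlam
    obtain ⟨hlam_ne, hlam_s⟩ := Finset.mem_erase.1 hlam
    have hsupp := (hsprops lam hlam_s).1
    have hsdlam := (hsprops lam hlam_s).2
    obtain ⟨w, w', hshape⟩ := prod_supp (ε := ε) ν lam (by
      rw [← hP0]
      exact Finsupp.mem_support_iff.1 hsupp)
    have hlt : BB C hC lam lam < BB C hC μ μ := by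
      have h4 := normA (hε := hε) hC0 hCsym ν hνdom w w' lam hshape hsdlam
        (by rw [hμν]; exact hlam_ne)
      rwa [hμν] at h4
    have hnn := BB_nonneg (C := C) (hC := hC) lam
    exact ih ((BB C hC lam lam).toNat) (by omega) lam hsdlam rfl
  choose! Q hQ1 hQ2 using hrec
  refine ⟨SS C hC ν - ∑ lam ∈ s.erase μ, c lam • Q lam, ?_, ?_⟩
  · have h1 : ∀ lam ∈ s.erase μ, weylNumerator C hC ε rho * (c lam • Q lam)
        = c lam • weylNumerator C hC ε lam := by
      intro lam hlam
      rw [mul_smul_comm, hQ1 lam hlam]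
    rw [mul_sub, Finset.mul_sum, Finset.sum_congr rfl h1, ← hP0]
    nth_rewrite 1 [hseq]
    rw [← Finset.add_sum_erase s _ hμs, hcμ, one_smul]
    abel
  · intro u
    rw [T_sub, SS_invariant, T_sum]
    congr 1
    apply Finset.sum_congr rfl
    intro lam hlam
    rw [T_smul, hQ2 lam hlam]

end Algebra



end WCF

/-- Weyl character formula: for strictly dominant `ζ ∈ X^{++}`, the Weyl
numerator `Σ_{w∈W} ε_w e^{w(ζ)}` is divisible in `ℤ[X]` by the Weyl denominator
`Σ_{w∈W} ε_w e^{w(ρ)}`, and the quotient `S⁰_ζ` is `W`-invariant.  Here `C` is the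
Cartan matrix of a reduced root system with finite Weyl group `W`, `ε` the sign
character (`ε(s_i) = −1`), and `ρ` (the half-sum of positive roots) is the all-ones
vector in fundamental-weight coordinates. -/
theorem weyl_quotient_exists {I : Type*} [Fintype I] [DecidableEq I]
    (C : Matrix I I ℤ) (hC : ∀ i, C i i = 2)
    (hC0 : ∀ i j, i ≠ j → C i j ≤ 0) (hCsym : ∀ i j, C i j = 0 ↔ C j i = 0)
    [Fintype (weylGroup C hC)]
    (ε : weylGroup C hC →* ℤˣ)
    (hε : ∀ i, ε ⟨simpleRefl C hC i, Subgroup.subset_closure (Set.mem_range_self i)⟩ = -1)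
    (ζ : I → ℤ) (hζ : ∀ i, 1 ≤ ζ i) :
    ∃ q : AddMonoidAlgebra ℤ (I → ℤ),
      weylNumerator C hC ε rho * q = weylNumerator C hC ε ζ ∧
      ∀ w : weylGroup C hC,
        Finsupp.mapDomain ((w : AddAut (I → ℤ)) : (I → ℤ) → (I → ℤ)) q.coeff = q.coeff := by
  obtain ⟨q, h1, h2⟩ := WCF.main_induction (hε := hε) hC0 hCsym
    ((WCF.BB C hC ζ ζ).toNat) ζ hζ rfl
  exact ⟨q, h1, fun w => congrArg AddMonoidAlgebra.coeff (h2 w)⟩
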